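/- arXiv:0805.0020 — 6 statements merged into one kernel-verified Lean document; each statement's English description precedes it below -/
import Mathlib

section
/- For every bounded measurable set B ⊆ ℂ, the gravity potential Π_B is continuously differentiable on all of ℂ (viewed as ℝ²), and for every ζ ∈ ℂ its gradient is given by ∇Π_B(ζ) = (1/(2π)) ∫_B (ζ − z)/|ζ − z|² dA(z), where the integrand is viewed as a vector in ℝ². -/
open MeasureTheory

open Metric Complex Filter Topology Set InnerProductSpace in
private lemma gp_integrableOn_rpow_ball {a : ℝ} (ha0 : 0 ≤ a) (ha : a < 2) {R : ℝ} (hR : 0 < R) :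
    IntegrableOn (fun x : ℂ => ‖x‖ ^ (-a)) (ball (0:ℂ) R) := by
  set f : ℂ → ℝ := fun x => ‖x‖ ^ (-a) with hf
  have hfm : Measurable f := by fun_prop
  set s : ℕ → Set ℂ := fun n => ball (0:ℂ) (R / 2 ^ n) \ ball 0 (R / 2 ^ (n+1)) with hs
  have hbn : ∀ n : ℕ, (0:ℝ) < R / 2 ^ (n+1) := fun n => by positivity
  have hmeas : ∀ n, MeasurableSet (s n) := fun n => measurableSet_ball.diff measurableSet_ball
  have hbound : ∀ n, ∀ x ∈ s n, f x ≤ (R / 2 ^ (n+1)) ^ (-a) := by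
    intro n x hx
    exact Real.rpow_le_rpow_of_nonpos (hbn n) (by simpa using hx.2) (neg_nonpos.mpr ha0)
  have hint : ∀ n, IntegrableOn f (s n) := by
    intro n
    refine Measure.integrableOn_of_bounded (M := (R / 2 ^ (n+1)) ^ (-a)) ?_ hfm.aestronglyMeasurable ?_
    · exact ne_of_lt (lt_of_le_of_lt (measure_mono (diff_subset.trans Subset.rfl)) measure_ball_lt_top)
    · exact (ae_restrict_iff' (hmeas n)).mpr (ae_of_all _ fun x hx => by
        rw [Real.norm_eq_abs, _root_.abs_of_nonneg (Real.rpow_nonneg (norm_nonneg x) _)]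
        exact hbound n x hx)
  have hsum : Summable fun n => ∫ x in s n, ‖f x‖ := by
    set r : ℝ := (1/2 : ℝ) ^ (2 - a) with hr
    have hr0 : 0 < r := Real.rpow_pos_of_pos (by norm_num) _
    have hr1 : r < 1 := Real.rpow_lt_one (by norm_num) (by norm_num) (by linarith)
    have hK : ∀ n, ∫ x in s n, ‖f x‖ ≤ (4 * Real.pi * (R/2) ^ (2 - a)) * r ^ n := by
      intro n
      set b : ℝ := R / 2 ^ (n+1) with hb
      have hb0 : 0 < b := hbn n
      have h1 : ∫ x in s n, ‖f x‖ ≤ b ^ (-a) * (volume (s n)).toReal := by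
        have := norm_setIntegral_le_of_norm_le_const (μ := volume) (s := s n)
          (C := b ^ (-a)) (f := fun x => ‖f x‖)
          (lt_of_le_of_lt (measure_mono (diff_subset.trans Subset.rfl)) measure_ball_lt_top)
          (fun x hx => by
            simp only [Real.norm_eq_abs, _root_.abs_abs]
            rw [_root_.abs_of_nonneg (Real.rpow_nonneg (norm_nonneg x) _)]
            exact hbound n x hx)
        calc ∫ x in s n, ‖f x‖ ≤ ‖∫ x in s n, ‖f x‖‖ := le_abs_self _
        _ ≤ b ^ (-a) * (volume (s n)).toReal := this
      have h2 : (volume (s n)).toReal ≤ Real.pi * (2*b)^2 := by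
        have : volume (s n) ≤ volume (ball (0:ℂ) (R / 2 ^ n)) := measure_mono diff_subset
        rw [Complex.volume_ball] at this
        have h3 : (R / 2 ^ n) = 2 * b := by rw [hb]; ring
        calc (volume (s n)).toReal ≤ ((ENNReal.ofReal (R / 2 ^ n)) ^ 2 * NNReal.pi).toReal := by
              exact ENNReal.toReal_mono (ENNReal.mul_ne_top (ENNReal.pow_ne_top ENNReal.ofReal_ne_top) ENNReal.coe_ne_top) this
        _ = Real.pi * (2*b)^2 := by
              rw [ENNReal.toReal_mul, ENNReal.toReal_pow, ENNReal.toReal_ofReal (by positivity), h3]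
              rw [ENNReal.coe_toReal, NNReal.coe_real_pi]
              ring
      calc ∫ x in s n, ‖f x‖ ≤ b ^ (-a) * (Real.pi * (2*b)^2) := by
            refine h1.trans ?_
            exact mul_le_mul_of_nonneg_left h2 (Real.rpow_nonneg hb0.le _)
      _ = 4 * Real.pi * b ^ (2 - a) := by
            have hb2 : b ^ (2 - a) = b ^ (-a) * b ^ (2:ℝ) := by
              rw [← Real.rpow_add hb0]; congr 1; ring
            rw [hb2, Real.rpow_two]; ring
      _ ≤ (4 * Real.pi * (R/2) ^ (2 - a)) * r ^ n := by
            have : b = (R/2) * (1/2:ℝ)^n := by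
              rw [hb, div_pow, one_pow, pow_succ,
                div_mul_eq_mul_div, mul_one_div, div_div, mul_comm ((2:ℝ)^n) 2]
            rw [this, Real.mul_rpow (by positivity) (by positivity)]
            rw [← Real.rpow_natCast ((1:ℝ)/2) n, ← Real.rpow_mul (by norm_num),
              mul_comm (n:ℝ) (2-a), Real.rpow_mul (by norm_num), Real.rpow_natCast, hr]
            ring_nf
            exact le_refl _
    refine Summable.of_nonneg_of_le (fun n => by positivity) hK ?_
    exact ((summable_geometric_of_lt_one hr0.le hr1).mul_left _)
  have hU : IntegrableOn f (⋃ n, s n) :=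
    integrableOn_iUnion_of_summable_integral_norm hint hsum
  have hcover : ball (0:ℂ) R ⊆ (⋃ n, s n) ∪ {0} := by
    intro x hx
    rcases eq_or_ne x 0 with h0 | h0
    · exact Or.inr (by simp [h0])
    refine Or.inl ?_
    have hx0 : 0 < ‖x‖ := norm_pos_iff.mpr h0
    have hex : ∃ n : ℕ, R / 2 ^ (n+1) ≤ ‖x‖ := by
      obtain ⟨n, hn⟩ := pow_unbounded_of_one_lt (R / ‖x‖) (one_lt_two (α := ℝ))
      refine ⟨n, ?_⟩
      rw [div_le_iff₀ (by positivity), pow_succ]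
      nlinarith [pow_pos (zero_lt_two (α := ℝ)) n, (div_lt_iff₀ hx0).mp hn]
    classical
    set n := Nat.find hex with hn
    refine mem_iUnion.mpr ⟨n, ?_, by simpa using Nat.find_spec hex⟩
    simp only [mem_ball, dist_zero_right]
    rcases Nat.eq_zero_or_pos n with h | h
    · simpa [h] using mem_ball_zero_iff.mp hx
    · have := Nat.find_min hex (m := n - 1) (by omega)
      push_neg at this
      have hn1 : n - 1 + 1 = n := by omega
      rw [hn1] at this
      exact this
  refine (hU.union ?_).mono_set hcover
  rw [IntegrableOn, Measure.restrict_eq_zero.mpr (by simp)]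
  exact integrable_zero_measure

open Metric Complex Filter Topology Set InnerProductSpace in
private lemma gp_integrableOn_inv_norm_ball {R : ℝ} :
    IntegrableOn (fun x : ℂ => ‖x‖⁻¹) (ball (0:ℂ) R) := by
  rcases le_or_gt R 0 with h | h
  · simp [ball_eq_empty.mpr h]
  · have := gp_integrableOn_rpow_ball (a := 1) zero_le_one one_lt_two h
    simp_rw [Real.rpow_neg_one] at this
    exact this

open Metric Complex Filter Topology Set InnerProductSpace in
private lemma gp_indicator_shift {E : Type*} [NormedAddCommGroup E] {g : ℂ → E} {R : ℝ} (ζ : ℂ) :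
    (fun x => Set.indicator (ball (0:ℂ) R) g (x - ζ))
      = Set.indicator (ball ζ R) (fun z => g (z - ζ)) := by
  funext x
  by_cases hx : x ∈ ball ζ R
  · rw [Set.indicator_of_mem hx, Set.indicator_of_mem (by
      simpa [mem_ball, dist_eq_norm] using hx)]
  · rw [Set.indicator_of_notMem hx, Set.indicator_of_notMem (by
      simpa [mem_ball, dist_eq_norm] using hx)]

open Metric Complex Filter Topology Set InnerProductSpace in
private lemma gp_integrableOn_shift {E : Type*} [NormedAddCommGroup E] [NormedSpace ℝ E]
    [MeasurableSpace E] [BorelSpace E] [SecondCountableTopology E] {g : ℂ → E} {R : ℝ}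
    (hg : IntegrableOn g (ball (0:ℂ) R)) (ζ : ℂ) :
    IntegrableOn (fun z => g (z - ζ)) (ball ζ R) := by
  have h1 : Integrable (Set.indicator (ball (0:ℂ) R) g) :=
    (integrable_indicator_iff measurableSet_ball).mpr hg
  have h2 := h1.comp_sub_right ζ
  rw [gp_indicator_shift] at h2
  exact (integrable_indicator_iff measurableSet_ball).mp h2

open Metric Complex Filter Topology Set InnerProductSpace in
private lemma gp_setIntegral_shift (g : ℂ → ℝ) (ζ : ℂ) (R : ℝ) :
    ∫ z in ball ζ R, g (z - ζ) = ∫ x in ball (0:ℂ) R, g x := by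
  rw [← integral_indicator measurableSet_ball, ← integral_indicator measurableSet_ball,
    ← gp_indicator_shift, integral_sub_right_eq_self _ ζ]

open Metric Complex Filter Topology Set InnerProductSpace in
private lemma gp_integrableOn_abs_log_ball {R : ℝ} (hR : 0 < R) :
    IntegrableOn (fun x : ℂ => |Real.log ‖x‖|) (ball (0:ℂ) R) := by
  have hg : IntegrableOn (fun x : ℂ => 2 * ‖x‖ ^ (-(1/2) : ℝ) + R) (ball (0:ℂ) R) :=
    ((gp_integrableOn_rpow_ball (by norm_num) (by norm_num) hR).const_mul 2).add
      (integrableOn_const measure_ball_lt_top.ne)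
  refine Integrable.mono' hg ?_ ?_
  · exact (Real.measurable_log.comp measurable_norm).abs.aestronglyMeasurable
  · refine (ae_restrict_iff' measurableSet_ball).mpr (ae_of_all _ fun x hx => ?_)
    rw [Real.norm_eq_abs, _root_.abs_abs]
    have hxR : ‖x‖ < R := mem_ball_zero_iff.mp hx
    have hrp : (0:ℝ) ≤ 2 * ‖x‖ ^ (-(1/2) : ℝ) := by positivity
    rcases eq_or_lt_of_le (norm_nonneg x) with h0 | h0
    · rw [← h0, Real.log_zero, abs_zero, Real.zero_rpow (by norm_num : (-(1/2):ℝ) ≠ 0)]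
      linarith
    rcases le_or_gt ‖x‖ 1 with h1 | h1
    · rw [_root_.abs_of_nonpos (Real.log_nonpos (norm_nonneg x) h1)]
      have hl := Real.log_le_sub_one_of_pos (Real.rpow_pos_of_pos h0 (-(1/2) : ℝ))
      rw [Real.log_rpow h0] at hl
      nlinarith [Real.rpow_pos_of_pos h0 (-(1/2) : ℝ)]
    · rw [_root_.abs_of_nonneg (Real.log_nonneg h1.le)]
      have := Real.log_le_sub_one_of_pos h0
      linarith

open Metric Complex Filter Topology Set InnerProductSpace in
private lemma gp_tendsto_H :
    Tendsto (fun k : ℕ => ∫ x in ball (0:ℂ) (1/(k+1) : ℝ), ‖x‖⁻¹) atTop (𝓝 0) := by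
  have hball : ∀ k : ℕ, ball (0:ℂ) (1/(k+1) : ℝ) ⊆ ball (0:ℂ) 1 := fun k =>
    ball_subset_ball (by rw [div_le_one (by positivity)]; linarith [Nat.cast_nonneg (α := ℝ) k])
  have key : Tendsto (fun k : ℕ => ∫ x in ball (0:ℂ) 1,
      Set.indicator (ball (0:ℂ) (1/(k+1) : ℝ)) (fun x => ‖x‖⁻¹) x) atTop
      (𝓝 (∫ x in ball (0:ℂ) 1, (0:ℝ))) := by
    refine tendsto_integral_of_dominated_convergence (fun x => ‖x‖⁻¹) ?_ ?_ ?_ ?_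
    · intro k
      exact ((measurable_norm.inv.aestronglyMeasurable).indicator measurableSet_ball)
    · exact gp_integrableOn_inv_norm_ball
    · intro k
      refine ae_of_all _ fun x => ?_
      rw [Real.norm_eq_abs]
      by_cases hx : x ∈ ball (0:ℂ) (1/(k+1) : ℝ)
      · rw [Set.indicator_of_mem hx, _root_.abs_of_nonneg (by positivity)]
      · rw [Set.indicator_of_notMem hx, abs_zero]; positivity
    · refine (ae_restrict_iff' measurableSet_ball).mpr ?_
      have h0 : ∀ᵐ x : ℂ, x ≠ 0 := by
        refine (ae_iff).mpr ?_
        simpa using measure_singleton (0:ℂ)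
      filter_upwards [h0] with x hx _
      have hx0 : 0 < ‖x‖ := norm_pos_iff.mpr hx
      obtain ⟨K, hK⟩ := exists_nat_gt (1/‖x‖)
      refine tendsto_nhds_of_eventually_eq ?_
      filter_upwards [eventually_ge_atTop K] with k hk
      refine Set.indicator_of_notMem ?_ _
      simp only [mem_ball, dist_zero_right, not_lt]
      rw [div_le_iff₀ (by positivity)]
      have h1 : 1/‖x‖ < (k:ℝ) + 1 := by
        have : (K:ℝ) ≤ k := by exact_mod_cast hk
        linarith
      rw [div_lt_iff₀ hx0] at h1
      linarith
  rw [integral_zero] at key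
  refine key.congr fun k => ?_
  rw [integral_indicator measurableSet_ball, Measure.restrict_restrict measurableSet_ball,
    inter_eq_self_of_subset_left (hball k)]

open Metric Complex Filter Topology Set InnerProductSpace in
private lemma gp_toDual_eq_innerSL (v : ℂ) : (toDual ℝ ℂ) v = innerSL ℝ v := by
  ext w
  simp [toDual_apply_apply]

open Metric Complex Filter Topology Set InnerProductSpace in
private lemma gp_kernel_deriv {ε : ℝ} (hε : ε ≠ 0) (z ζ : ℂ) :
    HasFDerivAt (fun ζ : ℂ => Real.log (‖z - ζ‖ ^ 2 + ε ^ 2) / 2)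
      (innerSL ℝ (((‖ζ - z‖ ^ 2 + ε ^ 2))⁻¹ • (ζ - z))) ζ := by
  rw [← gp_toDual_eq_innerSL]
  have hre : (fun ζ : ℂ => Real.log (‖z - ζ‖ ^ 2 + ε ^ 2) / 2)
      = fun ζ : ℂ => Real.log (‖ζ - z‖ ^ 2 + ε ^ 2) / 2 := by
    funext w
    rw [norm_sub_rev]
  rw [hre]
  have h1 : HasFDerivAt (fun w : ℂ => w - z) (ContinuousLinearMap.id ℝ ℂ) ζ :=
    (hasFDerivAt_id ζ).sub_const z
  have h2 := h1.norm_sq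
  have h3 := (h2.add_const (ε ^ 2)).log (by positivity)
  have h4 := h3.const_mul ((2:ℝ)⁻¹)
  simp_rw [div_eq_inv_mul]
  refine h4.congr_fderiv ?_
  ext w
  have hne : ‖ζ - z‖ ^ 2 + ε ^ 2 = ‖ζ - z‖ ^ 2 + ε ^ 2 := by
    rfl
  simp only [toDual_apply_apply, ContinuousLinearMap.coe_smul', Pi.smul_apply,
    ContinuousLinearMap.smul_apply, ContinuousLinearMap.coe_comp', Function.comp_apply,
    ContinuousLinearMap.coe_id', id_eq, innerSL_apply_apply, real_inner_smul_left, hne]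
  simp only [smul_eq_mul]
  ring
open Metric Complex Filter Topology Set InnerProductSpace in
private lemma gp_norm_smul_inv {c : ℝ} (hc : 0 < c) (w : ℂ) : ‖c⁻¹ • w‖ = ‖w‖ / c := by
  rw [norm_smul, Real.norm_eq_abs, _root_.abs_of_nonneg (inv_nonneg.mpr hc.le), inv_mul_eq_div]

open Metric Complex Filter Topology Set InnerProductSpace in
private lemma gp_norm_g (ζ z : ℂ) :
    ‖(‖ζ - z‖ ^ 2)⁻¹ • (ζ - z)‖ = ‖z - ζ‖⁻¹ := by
  rcases eq_or_ne z ζ with h | h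
  · simp [h]
  have h0 : (0:ℝ) < ‖ζ - z‖ := by
    simpa using sub_ne_zero.mpr (Ne.symm h)
  rw [gp_norm_smul_inv (by positivity), norm_sub_rev]
  rw [sq]
  field_simp

open Metric Complex Filter Topology Set InnerProductSpace in
private lemma gp_norm_gk {e : ℝ} (he : e ≠ 0) (ζ z : ℂ) :
    ‖(‖ζ - z‖ ^ 2 + e ^ 2)⁻¹ • (ζ - z)‖
      = ‖ζ - z‖ / (‖ζ - z‖ ^ 2 + e ^ 2) := by
  have hpos : (0:ℝ) < ‖ζ - z‖ ^ 2 + e ^ 2 := by positivity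
  rw [gp_norm_smul_inv hpos]

open Metric Complex Filter Topology Set InnerProductSpace in
private lemma gp_norm_gk_le_inv {e : ℝ} (he : e ≠ 0) (ζ z : ℂ) :
    ‖(‖ζ - z‖ ^ 2 + e ^ 2)⁻¹ • (ζ - z)‖ ≤ ‖z - ζ‖⁻¹ := by
  rw [gp_norm_gk he, norm_sub_rev z ζ]
  set t := ‖ζ - z‖ with ht
  have ht0 : 0 ≤ t := norm_nonneg _
  rcases eq_or_lt_of_le ht0 with h0 | h0
  · rw [← h0]
    simp
  · rw [div_le_iff₀ (by positivity)]
    have hexp : t⁻¹ * (t ^ 2 + e ^ 2) = t + t⁻¹ * e ^ 2 := by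
      field_simp
    rw [hexp]
    linarith [mul_nonneg (inv_nonneg.mpr h0.le) (sq_nonneg e)]

open Metric Complex Filter Topology Set InnerProductSpace in
private lemma gp_norm_gk_le_const {e : ℝ} (he : 0 < e) (ζ z : ℂ) :
    ‖(‖ζ - z‖ ^ 2 + e ^ 2)⁻¹ • (ζ - z)‖ ≤ (2 * e)⁻¹ := by
  rw [gp_norm_gk he.ne', inv_eq_one_div, div_le_div_iff₀ (by positivity) (by positivity)]
  nlinarith [sq_nonneg (‖ζ - z‖ - e), norm_nonneg (ζ - z)]

open Metric Complex Filter Topology Set InnerProductSpace in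
private lemma gp_unif_est (B : Set ℂ) (hBm : MeasurableSet B) (hμB : volume B ≠ ⊤)
    {e r : ℝ} (he : 0 < e) (hr : 0 < r) (ζ : ℂ)
    (hGint : IntegrableOn (fun z => (‖ζ - z‖ ^ 2)⁻¹ • (ζ - z)) B)
    (hGkint : IntegrableOn (fun z => (‖ζ - z‖ ^ 2 + e ^ 2)⁻¹ • (ζ - z)) B) :
    ‖(∫ z in B, (‖ζ - z‖ ^ 2 + e ^ 2)⁻¹ • (ζ - z))
        - ∫ z in B, (‖ζ - z‖ ^ 2)⁻¹ • (ζ - z)‖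
      ≤ 2 * (∫ x in ball (0:ℂ) r, ‖x‖⁻¹) + e ^ 2 / r ^ 3 * (volume B).toReal := by
  set gk : ℂ → ℂ := fun z => (‖ζ - z‖ ^ 2 + e ^ 2)⁻¹ • (ζ - z) with hgk
  set g : ℂ → ℂ := fun z => (‖ζ - z‖ ^ 2)⁻¹ • (ζ - z) with hg
  have hd : IntegrableOn (fun z => gk z - g z) B := hGkint.sub hGint
  have hinv_ball : IntegrableOn (fun z : ℂ => ‖z - ζ‖⁻¹) (ball ζ r) :=
    gp_integrableOn_shift gp_integrableOn_inv_norm_ball ζ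
  rw [← integral_sub hGkint hGint]
  have step1 : ‖∫ z in B, (gk z - g z)‖ ≤ ∫ z in B, ‖gk z - g z‖ :=
    norm_integral_le_integral_norm _
  have split : ∫ z in B, ‖gk z - g z‖
      = (∫ z in B ∩ ball ζ r, ‖gk z - g z‖) + ∫ z in B \ ball ζ r, ‖gk z - g z‖ :=
    (integral_inter_add_diff measurableSet_ball hd.norm).symm
  have near : (∫ z in B ∩ ball ζ r, ‖gk z - g z‖) ≤ 2 * ∫ x in ball (0:ℂ) r, ‖x‖⁻¹ := by
    have hp : ∀ z : ℂ, ‖gk z - g z‖ ≤ 2 * ‖z - ζ‖⁻¹ := by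
      intro z
      calc ‖gk z - g z‖ ≤ ‖gk z‖ + ‖g z‖ := norm_sub_le _ _
      _ ≤ ‖z - ζ‖⁻¹ + ‖z - ζ‖⁻¹ := by
          refine add_le_add (gp_norm_gk_le_inv he.ne' ζ z) ?_
          rw [gp_norm_g ζ z]
      _ = 2 * ‖z - ζ‖⁻¹ := by ring
    calc (∫ z in B ∩ ball ζ r, ‖gk z - g z‖) ≤ ∫ z in B ∩ ball ζ r, 2 * ‖z - ζ‖⁻¹ := by
          refine setIntegral_mono_on (IntegrableOn.mono_set hd.norm inter_subset_left)
            (IntegrableOn.mono_set (hinv_ball.const_mul 2) inter_subset_right)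
            (hBm.inter measurableSet_ball) (fun z _ => hp z)
    _ ≤ ∫ z in ball ζ r, 2 * ‖z - ζ‖⁻¹ := by
          refine setIntegral_mono_set (hinv_ball.const_mul 2)
            (ae_of_all _ fun z => by positivity) (HasSubset.Subset.eventuallyLE inter_subset_right)
    _ = 2 * ∫ z in ball ζ r, ‖z - ζ‖⁻¹ := integral_const_mul 2 _
    _ = 2 * ∫ x in ball (0:ℂ) r, ‖x‖⁻¹ := by
          rw [gp_setIntegral_shift (fun x => ‖x‖⁻¹) ζ r]
  have far : (∫ z in B \ ball ζ r, ‖gk z - g z‖) ≤ e ^ 2 / r ^ 3 * (volume B).toReal := by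
    have hfar : ∀ z ∈ B \ ball ζ r, ‖gk z - g z‖ ≤ e ^ 2 / r ^ 3 := by
      intro z hz
      have htr : r ≤ ‖ζ - z‖ := by
        have := hz.2
        simp only [mem_ball, not_lt] at this
        rwa [dist_comm, dist_eq_norm] at this
      set t := ‖ζ - z‖ with ht
      have ht0 : 0 < t := lt_of_lt_of_le hr htr
      have heq : gk z - g z = ((t ^ 2 + e ^ 2)⁻¹ - (t ^ 2)⁻¹) • (ζ - z) := by
        rw [hgk, hg, sub_smul]
      rw [heq, norm_smul, Real.norm_eq_abs, ← ht]
      have habs : |(t ^ 2 + e ^ 2)⁻¹ - (t ^ 2)⁻¹| = (t ^ 2)⁻¹ - (t ^ 2 + e ^ 2)⁻¹ := by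
        rw [abs_sub_comm, _root_.abs_of_nonneg]
        have : (t ^ 2 + e ^ 2)⁻¹ ≤ (t ^ 2)⁻¹ := by
          apply inv_anti₀ (by positivity)
          nlinarith [sq_nonneg e]
        linarith
      rw [habs, inv_sub_inv (by positivity) (by positivity)]
      have hnum : t ^ 2 + e ^ 2 - t ^ 2 = e ^ 2 := by ring
      rw [hnum, div_mul_eq_mul_div, div_le_div_iff₀ (by positivity) (by positivity)]
      nlinarith [mul_le_mul_of_nonneg_left (pow_le_pow_left₀ hr.le htr 3)
          (mul_nonneg (sq_nonneg e) ht0.le),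
        mul_nonneg (mul_nonneg (sq_nonneg e) (sq_nonneg t)) (sq_nonneg e), sq_nonneg t, ht0.le]
    have hfin : volume (B \ ball ζ r) < ⊤ :=
      lt_of_le_of_lt (measure_mono diff_subset) (lt_top_iff_ne_top.mpr hμB)
    have := norm_setIntegral_le_of_norm_le_const (μ := volume) (s := B \ ball ζ r)
      (C := e ^ 2 / r ^ 3) (f := fun z => ‖gk z - g z‖) hfin
      (fun z hz => by
        rw [Real.norm_eq_abs, _root_.abs_of_nonneg (norm_nonneg _)]
        exact hfar z hz)
    calc (∫ z in B \ ball ζ r, ‖gk z - g z‖) ≤ ‖∫ z in B \ ball ζ r, ‖gk z - g z‖‖ :=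
          le_abs_self _
    _ ≤ e ^ 2 / r ^ 3 * (volume (B \ ball ζ r)).toReal := this
    _ ≤ e ^ 2 / r ^ 3 * (volume B).toReal := by
          refine mul_le_mul_of_nonneg_left ?_ (by positivity)
          exact ENNReal.toReal_mono hμB (measure_mono diff_subset)
  calc ‖∫ z in B, (gk z - g z)‖ ≤ ∫ z in B, ‖gk z - g z‖ := step1
  _ = _ := split
  _ ≤ _ := add_le_add near far
/-- The gravity potential of a bounded measurable set `B ⊆ ℂ`:
`Π_B(ζ) = (1/(2π)) ∫_B log|z − ζ| dA(z)`. -/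
noncomputable def gravPotential (B : Set ℂ) (ζ : ℂ) : ℝ :=
  (1 / (2 * Real.pi)) * ∫ z in B, Real.log ‖z - ζ‖

open Metric Complex Filter Topology Set InnerProductSpace in
/-- For every bounded measurable set `B ⊆ ℂ`, the gravity potential `Π_B` is continuously
differentiable on all of `ℂ` (viewed as `ℝ²`), and for every `ζ` its gradient (as a vector
in `ℝ² ≅ ℂ`) is `∇Π_B(ζ) = (1/(2π)) ∫_B (ζ − z)/|ζ − z|² dA(z)`. -/
theorem gravPotential_contDiff_and_gradient
    (B : Set ℂ) (hBm : MeasurableSet B) (hBb : Bornology.IsBounded B) :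
    ContDiff ℝ 1 (gravPotential B) ∧
      ∀ ζ : ℂ,
        gradient (gravPotential B) ζ =
          (1 / (2 * Real.pi)) • ∫ z in B, (ζ - z) / ((‖ζ - z‖ : ℝ) : ℂ) ^ 2 := by
  classical
  obtain ⟨r0, hr0pos, hBr0⟩ : ∃ r0 : ℝ, 0 < r0 ∧ B ⊆ ball (0:ℂ) r0 := by
    obtain ⟨r0, h1, h2⟩ := hBb.subset_ball_lt 0 0
    exact ⟨r0, h1, h2⟩
  have hμB : volume B ≠ ⊤ := ((measure_mono hBr0).trans_lt measure_ball_lt_top).ne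
  haveI hfinB : IsFiniteMeasure (volume.restrict B) := by
    constructor
    rw [Measure.restrict_apply_univ]
    exact lt_top_iff_ne_top.mpr hμB
  -- the epsilon sequence
  set e : ℕ → ℝ := fun k => 1/(k+1) with he
  have he0 : ∀ k, 0 < e k := fun k => by positivity
  have he1 : ∀ k, e k ≤ 1 := fun k => by
    rw [he, div_le_one (by positivity)]
    linarith [Nat.cast_nonneg (α := ℝ) k]
  have heto : Tendsto e atTop (𝓝 0) := tendsto_one_div_add_atTop_nhds_zero_nat
  -- the functions
  set g : ℂ → ℂ → ℂ := fun ζ z => (‖ζ - z‖ ^ 2)⁻¹ • (ζ - z) with hgdef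
  set gk : ℕ → ℂ → ℂ → ℂ :=
    fun k ζ z => (‖ζ - z‖ ^ 2 + (e k) ^ 2)⁻¹ • (ζ - z) with hgkdef
  set G : ℂ → ℂ := fun ζ => ∫ z in B, g ζ z with hGdef
  set Gk : ℕ → ℂ → ℂ := fun k ζ => ∫ z in B, gk k ζ z with hGkdef
  set F : ℂ → ℝ := fun ζ => ∫ z in B, Real.log (‖z - ζ‖) with hFdef
  set Fk : ℕ → ℂ → ℝ :=
    fun k ζ => ∫ z in B, Real.log (‖z - ζ‖ ^ 2 + (e k) ^ 2) / 2 with hFkdef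
  -- basic facts
  have hBsub : ∀ ζ : ℂ, B ⊆ ball ζ (r0 + ‖ζ‖) := by
    intro ζ z hz
    have := mem_ball_zero_iff.mp (hBr0 hz)
    rw [mem_ball, dist_eq_norm]
    calc ‖z - ζ‖ ≤ ‖z‖ + ‖ζ‖ := norm_sub_le z ζ
    _ < r0 + ‖ζ‖ := by linarith
  have hinvB : ∀ ζ : ℂ, IntegrableOn (fun z => ‖z - ζ‖⁻¹) B := fun ζ =>
    (gp_integrableOn_shift gp_integrableOn_inv_norm_ball ζ).mono_set (hBsub ζ)
  have hlogB : ∀ ζ : ℂ, IntegrableOn (fun z => |Real.log ‖z - ζ‖|) B := fun ζ =>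
    (gp_integrableOn_shift (gp_integrableOn_abs_log_ball (by positivity)) ζ).mono_set (hBsub ζ)
  have hcontInt : ∀ {f : ℂ → ℝ}, Continuous f → IntegrableOn f B := fun {f} hf =>
    (hf.continuousOn.integrableOn_compact hBb.isCompact_closure).mono_set subset_closure
  -- integrability of the integrands
  have hgmeas : ∀ ζ, AEStronglyMeasurable (g ζ) (volume.restrict B) := by
    intro ζ
    apply Measurable.aestronglyMeasurable
    refine Measurable.smul (f := fun z => (‖ζ - z‖ ^ 2)⁻¹) (g := fun z => ζ - z) ?_ ?_
    · exact ((continuous_norm.comp (continuous_const.sub continuous_id)).pow 2).measurable.inv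
    · exact (continuous_const.sub continuous_id).measurable
  have hGint : ∀ ζ, IntegrableOn (g ζ) B := by
    intro ζ
    refine Integrable.mono' (hinvB ζ) (hgmeas ζ) (ae_of_all _ fun z => le_of_eq ?_)
    exact gp_norm_g ζ z
  have hgkcont : ∀ k ζ, Continuous (gk k ζ) := by
    intro k ζ
    refine Continuous.smul (f := fun z => (‖ζ - z‖ ^ 2 + (e k) ^ 2)⁻¹) (g := fun z => ζ - z) (Continuous.inv₀ ?_ fun z => by positivity)
      (continuous_const.sub continuous_id)
    exact ((continuous_norm.comp (continuous_const.sub continuous_id)).pow 2).add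
      continuous_const
  have hgkcont' : ∀ k z, Continuous (fun ζ => gk k ζ z) := by
    intro k z
    refine Continuous.smul (f := fun ζ => (‖ζ - z‖ ^ 2 + (e k) ^ 2)⁻¹) (g := fun ζ => ζ - z) (Continuous.inv₀ ?_ fun ζ => by positivity)
      (continuous_id.sub continuous_const)
    exact ((continuous_norm.comp (continuous_id.sub continuous_const)).pow 2).add
      continuous_const
  have hGkint : ∀ k ζ, IntegrableOn (gk k ζ) B := by
    intro k ζ
    refine Integrable.mono' (hinvB ζ) (hgkcont k ζ).aestronglyMeasurable
      (ae_of_all _ fun z => gp_norm_gk_le_inv (he0 k).ne' ζ z)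
  -- derivative of Fk
  have hFk_deriv : ∀ k ζ, HasFDerivAt (Fk k) (innerSL ℝ (Gk k ζ)) ζ := by
    intro k ζ
    have key := hasFDerivAt_integral_of_dominated_of_fderiv_le (μ := volume.restrict B)
      (F := fun x z => Real.log (‖z - x‖ ^ 2 + (e k) ^ 2) / 2)
      (F' := fun x z => innerSL ℝ (gk k x z)) (x₀ := ζ) (bound := fun _ => (2 * e k)⁻¹)
      (Metric.ball_mem_nhds ζ zero_lt_one) ?_ ?_ ?_ ?_ ?_ ?_
    · have h2 : innerSL ℝ (Gk k ζ) = ∫ z in B, innerSL ℝ (gk k ζ z) := by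
        simp only [hGkdef]
        exact (ContinuousLinearMap.integral_comp_comm (innerSL ℝ) (hGkint k ζ)).symm
      rw [h2]
      exact key
    · refine Eventually.of_forall fun x => ?_
      refine Continuous.aestronglyMeasurable ?_
      refine Continuous.div_const (Continuous.log ?_ fun z => by positivity) 2
      exact ((continuous_norm.comp (continuous_id.sub continuous_const)).pow 2).add
        continuous_const
    · refine hcontInt ?_
      refine Continuous.div_const (Continuous.log ?_ fun z => by positivity) 2
      exact ((continuous_norm.comp (continuous_id.sub continuous_const)).pow 2).add
        continuous_const
    · refine Continuous.aestronglyMeasurable ?_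
      exact (innerSL ℝ).continuous.comp (hgkcont k ζ)
    · refine ae_of_all _ fun z x _ => ?_
      rw [innerSL_apply_norm]
      exact gp_norm_gk_le_const (he0 k) x z
    · exact integrable_const _
    · refine ae_of_all _ fun z x _ => ?_
      exact gp_kernel_deriv (he0 k).ne' z x
  -- continuity of Gk
  have hGk_cont : ∀ k, Continuous (Gk k) := by
    intro k
    rw [continuous_iff_continuousAt]
    intro ζ
    refine continuousAt_of_dominated (bound := fun _ => (2 * e k)⁻¹) ?_ ?_ ?_ ?_
    · exact Eventually.of_forall fun x => (hgkcont k x).aestronglyMeasurable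
    · exact Eventually.of_forall fun x =>
        ae_of_all _ fun z => gp_norm_gk_le_const (he0 k) x z
    · exact integrable_const _
    · exact ae_of_all _ fun z => (hgkcont' k z).continuousAt
  -- uniform convergence of Gk to G
  have hGk_unif : TendstoUniformly (fun k ζ => Gk k ζ) G atTop := by
    rw [Metric.tendstoUniformly_iff]
    intro δ hδ
    obtain ⟨k0, hk0⟩ := (Metric.tendsto_atTop.mp gp_tendsto_H) (δ/8) (by positivity)
    set r : ℝ := 1/((k0:ℝ)+1) with hr
    have hrpos : 0 < r := by positivity
    have hHnn : 0 ≤ ∫ x in ball (0:ℂ) r, ‖x‖⁻¹ :=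
      setIntegral_nonneg measurableSet_ball fun x _ => by positivity
    have hHr : (∫ x in ball (0:ℂ) r, ‖x‖⁻¹) < δ/8 := by
      have := hk0 k0 le_rfl
      rw [Real.dist_eq, sub_zero, _root_.abs_of_nonneg hHnn] at this
      exact this
    have hfar0 : Tendsto (fun k => (e k) ^ 2 / r ^ 3 * (volume B).toReal) atTop (𝓝 0) := by
      have h1 : Tendsto (fun k => (e k) ^ 2) atTop (𝓝 0) := by
        simpa using heto.pow 2
      simpa using (h1.div_const (r ^ 3)).mul_const (volume B).toReal
    have hfar : ∀ᶠ k in atTop, (e k) ^ 2 / r ^ 3 * (volume B).toReal < δ/4 :=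
      hfar0.eventually_lt_const (by positivity)
    filter_upwards [hfar] with k hk ζ
    rw [dist_comm, dist_eq_norm]
    have est := gp_unif_est B hBm hμB (he0 k) hrpos ζ (hGint ζ) (hGkint k ζ)
    calc ‖Gk k ζ - G ζ‖ ≤ 2 * (∫ x in ball (0:ℂ) r, ‖x‖⁻¹)
          + (e k) ^ 2 / r ^ 3 * (volume B).toReal := est
    _ < 2 * (δ/8) + δ/4 := by
        refine add_lt_add_of_le_of_lt ?_ hk
        linarith
    _ ≤ δ := by linarith
  -- pointwise convergence of Fk to F
  have hFk_tendsto : ∀ ζ, Tendsto (fun k => Fk k ζ) atTop (𝓝 (F ζ)) := by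
    intro ζ
    have hae : ∀ᵐ z ∂(volume.restrict B), z ≠ ζ := by
      refine ae_restrict_of_ae ?_
      refine (ae_iff).mpr ?_
      simpa using measure_singleton ζ
    refine tendsto_integral_of_dominated_convergence
      (bound := fun z => |Real.log ‖z - ζ‖| + Real.log (‖z - ζ‖ ^ 2 + 1) / 2) ?_ ?_ ?_ ?_
    · intro k
      refine Continuous.aestronglyMeasurable ?_
      refine Continuous.div_const (Continuous.log ?_ fun z => by positivity) 2
      exact ((continuous_norm.comp (continuous_id.sub continuous_const)).pow 2).add
        continuous_const
    · refine (hlogB ζ).add (hcontInt ?_)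
      refine Continuous.div_const (Continuous.log ?_ fun z => by positivity) 2
      exact ((continuous_id.sub continuous_const).norm.pow 2).add continuous_const
    · intro k
      filter_upwards [hae] with z hz
      have ht0 : 0 < ‖z - ζ‖ := by
        rw [norm_pos_iff, sub_ne_zero]; exact hz
      set t : ℝ := ‖z - ζ‖ with ht
      have habs : ‖z - ζ‖ = t := rfl
      rw [Real.norm_eq_abs, abs_div, _root_.abs_of_nonneg (by norm_num : (0:ℝ) ≤ 2)]
      have hek1 : (e k) ^ 2 ≤ 1 := by nlinarith [he0 k, he1 k]
      have hlow : Real.log (t ^ 2) ≤ Real.log (t ^ 2 + (e k) ^ 2) :=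
        Real.log_le_log (by positivity) (by nlinarith [sq_nonneg (e k)])
      have hup : Real.log (t ^ 2 + (e k) ^ 2) ≤ Real.log (t ^ 2 + 1) :=
        Real.log_le_log (by positivity) (by nlinarith)
      have hsq : Real.log (t ^ 2) = 2 * Real.log t := by
        rw [Real.log_pow]; push_cast; ring
      have hnn : 0 ≤ Real.log (t ^ 2 + 1) := Real.log_nonneg (by nlinarith)
      have habs2 : |Real.log (t ^ 2 + (e k) ^ 2)| ≤ 2 * |Real.log t| + Real.log (t ^ 2 + 1) := by
        rw [abs_le]
        constructor
        · linarith [neg_abs_le (Real.log t)]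
        · linarith [le_abs_self (Real.log t), abs_nonneg (Real.log t)]
      linarith
    · filter_upwards [hae] with z hz
      have ht0 : 0 < ‖z - ζ‖ := by
        rw [norm_pos_iff, sub_ne_zero]; exact hz
      have habs : ‖z - ζ‖ = ‖z - ζ‖ := rfl
      have h1 : Tendsto (fun k => ‖z - ζ‖ ^ 2 + (e k) ^ 2) atTop
          (𝓝 (‖z - ζ‖ ^ 2)) := by
        have h2 : Tendsto (fun k => (e k) ^ 2) atTop (𝓝 0) := by simpa using heto.pow 2
        simpa using tendsto_const_nhds.add h2
      have h3 := ((Real.continuousAt_log (by positivity)).tendsto.comp h1).div_const 2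
      have h4 : Real.log (‖z - ζ‖ ^ 2) / 2 = Real.log (‖z - ζ‖) := by
        rw [Real.log_pow]
        push_cast
        ring
      rwa [h4] at h3
  -- derivative of F
  have hF_deriv : ∀ ζ, HasFDerivAt F (innerSL ℝ (G ζ)) ζ := by
    have hunif : TendstoUniformly (fun k ζ => innerSL ℝ (Gk k ζ)) (fun ζ => innerSL ℝ (G ζ))
        atTop := by
      rw [Metric.tendstoUniformly_iff] at hGk_unif ⊢
      intro δ hδ
      filter_upwards [hGk_unif δ hδ] with k hk ζ
      have h5 := hk ζ
      have h6 : innerSL ℝ (G ζ) - innerSL ℝ (Gk k ζ) = innerSL ℝ (G ζ - Gk k ζ) :=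
        (map_sub (innerSL ℝ) _ _).symm
      rw [dist_eq_norm, h6, innerSL_apply_norm, ← dist_eq_norm]
      exact h5
    exact hasFDerivAt_of_tendstoUniformly hunif (fun k ζ => hFk_deriv k ζ) hFk_tendsto
  -- assemble
  have hderiv : ∀ ζ, HasFDerivAt (gravPotential B)
      ((1/(2*Real.pi)) • innerSL ℝ (G ζ)) ζ := by
    intro ζ
    have h1 := (hF_deriv ζ).const_mul (1/(2*Real.pi))
    exact h1
  have hgradv : ∀ ζ, HasGradientAt (gravPotential B) ((1/(2*Real.pi)) • G ζ) ζ := by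
    intro ζ
    rw [hasGradientAt_iff_hasFDerivAt, gp_toDual_eq_innerSL, _root_.map_smul]
    exact hderiv ζ
  have hGc : Continuous G := hGk_unif.continuous (Eventually.of_forall hGk_cont).frequently
  constructor
  · rw [contDiff_one_iff_fderiv]
    refine ⟨fun ζ => (hderiv ζ).differentiableAt, ?_⟩
    have hfd : fderiv ℝ (gravPotential B) = fun ζ => (1/(2*Real.pi)) • innerSL ℝ (G ζ) := by
      funext ζ
      exact (hderiv ζ).fderiv
    rw [hfd]
    exact ((innerSL ℝ).continuous.comp hGc).const_smul (1/(2*Real.pi))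
  · intro ζ
    rw [(hgradv ζ).gradient]
    congr 1
    rw [hGdef]
    refine integral_congr_ae (ae_of_all _ fun z => ?_)
    rcases eq_or_ne z ζ with h | h
    · simp [hgdef, h]
    · have h0 : ‖ζ - z‖ ≠ 0 := by
        simpa [sub_eq_zero] using (Ne.symm h)
      have h0' : ((‖ζ - z‖ : ℂ)) ^ 2 ≠ 0 := by
        simpa using h0
      rw [hgdef]
      simp only []
      rw [Complex.real_smul]
      push_cast
      field_simp
end

section
/- Let G ⊆ ℂ be a bounded measurable set of area S. Then for every point ζ ∈ ℂ, the gradient of the gravity potential satisfies |∇Π_G(ζ)| ≤ √(S/π). -/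
open MeasureTheory Set Pointwise

lemma keyA (G : Set ℂ) (S : ℝ) (hS0 : 0 < S)
    (hS : volume G = ENNReal.ofReal S) (w : ℂ) :
    ∫⁻ z in G, ENNReal.ofReal (‖z - w‖⁻¹) ≤ ENNReal.ofReal (2 * Real.sqrt (Real.pi * S)) := by
  set t₀ : ℝ := Real.sqrt (Real.pi / S) with ht₀
  have hπ := Real.pi_pos
  have ht₀pos : 0 < t₀ := Real.sqrt_pos.2 (by positivity)
  have hmble : AEMeasurable (fun z : ℂ => ‖z - w‖⁻¹) (volume.restrict G) :=
    (((measurable_id.sub_const w).norm).inv).aemeasurable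
  rw [lintegral_eq_lintegral_meas_lt (volume.restrict G)
    (Filter.Eventually.of_forall fun z => by positivity) hmble]
  have hsplit : Ioi (0:ℝ) = Ioc 0 t₀ ∪ Ioi t₀ := (Ioc_union_Ioi_eq_Ioi ht₀pos.le).symm
  rw [hsplit, lintegral_union measurableSet_Ioi (Ioc_disjoint_Ioi le_rfl)]
  have h1 : ∫⁻ t in Ioc (0:ℝ) t₀, (volume.restrict G) {z : ℂ | t < ‖z - w‖⁻¹}
      ≤ ENNReal.ofReal (Real.sqrt (Real.pi * S)) := by
    calc ∫⁻ t in Ioc (0:ℝ) t₀, (volume.restrict G) {z : ℂ | t < ‖z - w‖⁻¹}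
        ≤ ∫⁻ _t in Ioc (0:ℝ) t₀, ENNReal.ofReal S := by
          refine setLIntegral_mono measurable_const fun t _ => ?_
          calc (volume.restrict G) {z : ℂ | t < ‖z - w‖⁻¹}
              ≤ (volume.restrict G) univ := measure_mono (subset_univ _)
            _ = volume G := by simp
            _ = ENNReal.ofReal S := hS
      _ = ENNReal.ofReal S * volume (Ioc (0:ℝ) t₀) := by rw [setLIntegral_const]
      _ = ENNReal.ofReal S * ENNReal.ofReal t₀ := by rw [Real.volume_Ioc, sub_zero]
      _ = ENNReal.ofReal (S * t₀) := (ENNReal.ofReal_mul hS0.le).symm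
      _ = ENNReal.ofReal (Real.sqrt (Real.pi * S)) := by
          congr 1
          rw [ht₀, ← Real.sqrt_sq hS0.le, ← Real.sqrt_mul (sq_nonneg S)]
          congr 1
          field_simp
          rw [Real.sq_sqrt (sq_nonneg _)]
  have h2 : ∫⁻ t in Ioi t₀, (volume.restrict G) {z : ℂ | t < ‖z - w‖⁻¹}
      ≤ ENNReal.ofReal (Real.sqrt (Real.pi * S)) := by
    have hball : ∀ t ∈ Ioi t₀, (volume.restrict G) {z : ℂ | t < ‖z - w‖⁻¹}
        ≤ ENNReal.ofReal (Real.pi * (t⁻¹) ^ 2) := by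
      intro t ht
      have htpos : 0 < t := ht₀pos.trans ht
      have hsub : {z : ℂ | t < ‖z - w‖⁻¹} ⊆ Metric.ball w t⁻¹ := by
        intro z hz
        simp only [mem_setOf_eq] at hz
        have hzw : ‖z - w‖ ≠ 0 := by
          intro h0; rw [h0] at hz; simp at hz; exact absurd hz (not_lt.2 htpos.le)
        have hnorm : 0 < ‖z - w‖ := lt_of_le_of_ne (norm_nonneg _) (Ne.symm hzw)
        rw [Metric.mem_ball, dist_eq_norm]
        rw [lt_inv_comm₀ htpos hnorm] at hz
        exact hz
      calc (volume.restrict G) {z : ℂ | t < ‖z - w‖⁻¹}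
          ≤ (volume.restrict G) (Metric.ball w t⁻¹) := measure_mono hsub
        _ ≤ volume (Metric.ball w t⁻¹) := Measure.restrict_le_self _
        _ = ENNReal.ofReal t⁻¹ ^ 2 * NNReal.pi := Complex.volume_ball w t⁻¹
        _ = ENNReal.ofReal (Real.pi * (t⁻¹) ^ 2) := by
            rw [← ENNReal.ofReal_pow (by positivity), ← ENNReal.ofReal_coe_nnreal,
              NNReal.coe_real_pi, ← ENNReal.ofReal_mul (by positivity)]
            ring_nf
    calc ∫⁻ t in Ioi t₀, (volume.restrict G) {z : ℂ | t < ‖z - w‖⁻¹}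
        ≤ ∫⁻ t in Ioi t₀, ENNReal.ofReal (Real.pi * (t⁻¹) ^ 2) :=
          setLIntegral_mono (by measurability) hball
      _ = ENNReal.ofReal (∫ t in Ioi t₀, Real.pi * (t⁻¹) ^ 2) := by
          rw [ofReal_integral_eq_lintegral_ofReal]
          · refine (Integrable.const_mul ?_ Real.pi)
            have := (integrableOn_Ioi_rpow_of_lt (show (-2:ℝ) < -1 by norm_num) ht₀pos)
            refine this.congr_fun (fun x hx => ?_) measurableSet_Ioi
            have hx0 : (0:ℝ) < x := ht₀pos.trans hx
            beta_reduce
            rw [Real.rpow_neg hx0.le, Real.rpow_two, inv_pow]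
          · exact Filter.Eventually.of_forall fun t => by positivity
      _ ≤ ENNReal.ofReal (Real.sqrt (Real.pi * S)) := by
          apply ENNReal.ofReal_le_ofReal
          have hrpow : ∫ t in Ioi t₀, t ^ (-2:ℝ) = t₀⁻¹ := by
            rw [integral_Ioi_rpow_of_lt (by norm_num) ht₀pos]
            norm_num [Real.rpow_neg_one]
          have hint : ∫ t in Ioi t₀, Real.pi * (t⁻¹) ^ 2 = Real.pi * t₀⁻¹ := by
            rw [integral_const_mul]
            have : ∫ t in Ioi t₀, (t⁻¹) ^ 2 = ∫ t in Ioi t₀, t ^ (-2:ℝ) := by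
              refine setIntegral_congr_fun measurableSet_Ioi fun x hx => ?_
              have hx0 : (0:ℝ) < x := ht₀pos.trans hx
              rw [Real.rpow_neg hx0.le, Real.rpow_two, inv_pow]
            rw [this, hrpow]
          rw [hint]
          have : Real.pi * t₀⁻¹ = Real.sqrt (Real.pi * S) := by
            rw [ht₀, ← Real.sqrt_inv, ← Real.sqrt_sq hπ.le,
              ← Real.sqrt_mul (sq_nonneg _)]
            congr 1
            field_simp
            rw [Real.sq_sqrt (sq_nonneg _)]
          rw [this]
  calc _ ≤ ENNReal.ofReal (Real.sqrt (Real.pi * S)) + ENNReal.ofReal (Real.sqrt (Real.pi * S)) :=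
        add_le_add h1 h2
    _ = ENNReal.ofReal (2 * Real.sqrt (Real.pi * S)) := by
        rw [← ENNReal.ofReal_add (Real.sqrt_nonneg _) (Real.sqrt_nonneg _)]; ring_nf


lemma logBound (a d : ℂ) (h : ∀ t ∈ Set.Icc (0:ℝ) 1, a - t • d ≠ 0) :
    |Real.log ‖a - d‖ - Real.log ‖a‖| ≤ ∫ t in (0:ℝ)..1, ‖d‖ * ‖a - t • d‖⁻¹ := by
  set q : ℝ → ℝ := fun t => Complex.normSq (a - t • d) with hqdef
  set q' : ℝ → ℝ := fun t => -2 * ((a - t • d).re * d.re + (a - t • d).im * d.im) with hq'def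
  have hnormSq : ∀ w : ℂ, Complex.normSq w = ‖w‖ ^ 2 := by
    intro w; rw [Complex.sq_norm]
  have hq : ∀ t : ℝ, HasDerivAt q (q' t) t := by
    intro t
    have e1 : HasDerivAt (fun t : ℝ => a.re - t * d.re) (-d.re) t := by
      simpa using ((hasDerivAt_id t).mul_const d.re).const_sub a.re
    have e2 : HasDerivAt (fun t : ℝ => a.im - t * d.im) (-d.im) t := by
      simpa using ((hasDerivAt_id t).mul_const d.im).const_sub a.im
    have := ((e1.fun_pow 2).fun_add (e2.fun_pow 2))
    have heq : q = fun t : ℝ => (a.re - t * d.re) ^ 2 + (a.im - t * d.im) ^ 2 := by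
      funext s
      simp [hqdef, Complex.normSq_apply, Complex.sub_re, Complex.sub_im, Complex.smul_re,
        Complex.smul_im]
      ring
    rw [heq]
    refine this.congr_deriv ?_
    simp [hq'def, Complex.sub_re, Complex.sub_im, Complex.smul_re, Complex.smul_im]
    ring
  have hqpos : ∀ t ∈ Set.Icc (0:ℝ) 1, 0 < q t := fun t ht =>
    Complex.normSq_pos.2 (h t ht)
  have hg : ∀ t ∈ Set.uIcc (0:ℝ) 1, HasDerivAt (fun s => Real.log (q s)) (q' t / q t) t := by
    intro t ht
    rw [Set.uIcc_of_le zero_le_one] at ht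
    exact (hq t).log (hqpos t ht).ne'
  have hqcont : ContinuousOn q (Set.Icc (0:ℝ) 1) :=
    (Complex.continuous_normSq.comp (by fun_prop : Continuous fun t : ℝ => a - t • d)).continuousOn
  have hq'cont : ContinuousOn q' (Set.Icc (0:ℝ) 1) := by
    apply Continuous.continuousOn; fun_prop
  have hderivcont : ContinuousOn (fun t => q' t / q t) (Set.Icc (0:ℝ) 1) :=
    hq'cont.div hqcont (fun t ht => (hqpos t ht).ne')
  have hii : IntervalIntegrable (fun t => q' t / q t) volume 0 1 :=
    (hderivcont.mono (by rw [Set.uIcc_of_le zero_le_one])).intervalIntegrable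
  have hftc : Real.log (q 1) - Real.log (q 0) = ∫ t in (0:ℝ)..1, q' t / q t :=
    (intervalIntegral.integral_eq_sub_of_hasDerivAt hg hii).symm
  have hpt : ∀ t ∈ Set.Icc (0:ℝ) 1, |q' t / q t| ≤ 2 * (‖d‖ * ‖a - t • d‖⁻¹) := by
    intro t ht
    set x := a - t • d with hx
    have hr : 0 < ‖x‖ := norm_pos_iff.2 (h t ht)
    have hq_eq : q t = ‖x‖ ^ 2 := hnormSq x
    have hxre : ‖x‖ ^ 2 = x.re ^ 2 + x.im ^ 2 := by
      rw [← hnormSq]; simp [Complex.normSq_apply]; ring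
    have hdre : ‖d‖ ^ 2 = d.re ^ 2 + d.im ^ 2 := by
      rw [Complex.sq_norm]; simp [Complex.normSq_apply]; ring
    have hcs : |x.re * d.re + x.im * d.im| ≤ ‖x‖ * ‖d‖ := by
      rw [abs_le]
      constructor <;> nlinarith [sq_nonneg (x.re * d.im - x.im * d.re),
        norm_nonneg x, norm_nonneg d, sq_nonneg (‖x‖ - ‖d‖), sq_nonneg (‖x‖ + ‖d‖),
        mul_nonneg (norm_nonneg x) (norm_nonneg d)]
    have hq'le : |q' t| ≤ 2 * (‖x‖ * ‖d‖) := by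
      rw [hq'def]
      simp only
      rw [abs_mul, abs_neg, abs_two]
      have : |(a - t • d).re * d.re + (a - t • d).im * d.im| = |x.re * d.re + x.im * d.im| := by
        rw [hx]
      rw [this]
      linarith
    rw [abs_div, abs_of_pos (hqpos t ht), hq_eq]
    rw [div_le_iff₀ (by positivity)]
    calc |q' t| ≤ 2 * (‖x‖ * ‖d‖) := hq'le
      _ = 2 * (‖d‖ * ‖x‖⁻¹) * ‖x‖ ^ 2 := by
          rw [pow_two]; field_simp
  have hbdd_cont : ContinuousOn (fun t : ℝ => 2 * (‖d‖ * ‖a - t • d‖⁻¹)) (Set.Icc (0:ℝ) 1) := by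
    refine (continuousOn_const.mul (continuousOn_const.mul ?_))
    refine ContinuousOn.inv₀ (by fun_prop) (fun t ht => norm_ne_zero_iff.2 (h t ht))
  have habs : |∫ t in (0:ℝ)..1, q' t / q t| ≤ ∫ t in (0:ℝ)..1, 2 * (‖d‖ * ‖a - t • d‖⁻¹) := by
    calc |∫ t in (0:ℝ)..1, q' t / q t| ≤ ∫ t in (0:ℝ)..1, |q' t / q t| :=
          intervalIntegral.abs_integral_le_integral_abs zero_le_one
      _ ≤ ∫ t in (0:ℝ)..1, 2 * (‖d‖ * ‖a - t • d‖⁻¹) := by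
          refine intervalIntegral.integral_mono_on zero_le_one ?_
            ((hbdd_cont.mono (by rw [Set.uIcc_of_le zero_le_one])).intervalIntegrable) hpt
          exact (hii.abs)
  have hlog : ∀ w : ℂ, Real.log ‖w‖ = Real.log (Complex.normSq w) / 2 := by
    intro w
    rw [hnormSq, Real.log_pow]
    push_cast
    ring
  have hgoal : |Real.log ‖a - d‖ - Real.log ‖a‖|
      = |Real.log (q 1) - Real.log (q 0)| / 2 := by
    have h1 : q 1 = Complex.normSq (a - d) := by simp [hqdef]
    have h0 : q 0 = Complex.normSq a := by simp [hqdef]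
    have hsub : Real.log (Complex.normSq (a - d)) / 2 - Real.log (Complex.normSq a) / 2
        = (Real.log (q 1) - Real.log (q 0)) / 2 := by rw [h1, h0]; ring
    rw [hlog (a - d), hlog a, hsub, abs_div, abs_two]
  rw [hgoal, hftc]
  have : ∫ t in (0:ℝ)..1, 2 * (‖d‖ * ‖a - t • d‖⁻¹)
      = 2 * ∫ t in (0:ℝ)..1, ‖d‖ * ‖a - t • d‖⁻¹ := intervalIntegral.integral_const_mul _ _
  linarith [habs, this ▸ habs]


lemma segment_null (ζ d : ℂ) (hd : d ≠ 0) :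
    volume {z : ℂ | ∃ t ∈ Set.Icc (0:ℝ) 1, z - ζ - t • d = 0} = 0 := by
  have hspan : Submodule.span ℝ {d} ≠ ⊤ := by
    intro htop
    have hI : Complex.I * d ∈ Submodule.span ℝ {d} := htop ▸ Submodule.mem_top
    rw [Submodule.mem_span_singleton] at hI
    obtain ⟨r, hr⟩ := hI
    rw [Complex.real_smul] at hr
    have h1 : (r : ℂ) = Complex.I := mul_right_cancel₀ hd hr
    have h2 := congrArg Complex.im h1
    simp at h2
  have hsub : {z : ℂ | ∃ t ∈ Set.Icc (0:ℝ) 1, z - ζ - t • d = 0}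
      ⊆ ζ +ᵥ (Submodule.span ℝ {d} : Set ℂ) := by
    rintro z ⟨t, _, hz⟩
    refine ⟨t • d, Submodule.smul_mem _ t (Submodule.mem_span_singleton_self d), ?_⟩
    have : z = ζ + t • d := by linear_combination hz
    simp [this, vadd_eq_add]
  refine measure_mono_null hsub ?_
  rw [measure_vadd]
  exact Measure.addHaar_submodule volume _ hspan

lemma inv_integrable (G : Set ℂ) (S : ℝ) (hS0 : 0 < S)
    (hS : volume G = ENNReal.ofReal S) (w : ℂ) :
    IntegrableOn (fun z : ℂ => ‖z - w‖⁻¹) G := by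
  refine ⟨(((measurable_id.sub_const w).norm).inv).aestronglyMeasurable, ?_⟩
  rw [hasFiniteIntegral_iff_norm]
  have : ∫⁻ z in G, ENNReal.ofReal ‖‖z - w‖⁻¹‖ = ∫⁻ z in G, ENNReal.ofReal (‖z - w‖⁻¹) := by
    apply lintegral_congr fun z => by rw [Real.norm_eq_abs, abs_of_nonneg (by positivity)]
  rw [this]
  exact lt_of_le_of_lt (keyA G S hS0 hS w) ENNReal.ofReal_lt_top

lemma log_integrable (G : Set ℂ) (hGm : MeasurableSet G) (hGb : Bornology.IsBounded G)
    (S : ℝ) (hS0 : 0 < S) (hS : volume G = ENNReal.ofReal S) (ζ : ℂ) :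
    IntegrableOn (fun z : ℂ => Real.log ‖z - ζ‖) G := by
  obtain ⟨R, hR0, hR⟩ := hGb.subset_closedBall_lt 0 0
  have hfin : volume G < ⊤ := by rw [hS]; exact ENNReal.ofReal_lt_top
  have hmeas : AEStronglyMeasurable (fun z : ℂ => Real.log ‖z - ζ‖) (volume.restrict G) :=
    (Real.measurable_log.comp ((measurable_id.sub_const ζ).norm)).aestronglyMeasurable
  refine Integrable.mono' (g := fun z : ℂ => ‖z - ζ‖⁻¹ + (R + ‖ζ‖)) ?_ hmeas ?_
  · exact (inv_integrable G S hS0 hS ζ).add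
      (integrableOn_const hfin.ne)
  · have hne : ∀ᵐ z : ℂ ∂volume.restrict G, z ≠ ζ := by
      refine Filter.Eventually.filter_mono (ae_mono Measure.restrict_le_self) ?_
      rw [ae_iff]
      refine measure_mono_null (fun z hz => ?_) (measure_singleton ζ)
      simpa using hz
    filter_upwards [hne, ae_restrict_mem hGm] with z hz hzG
    have hr : 0 < ‖z - ζ‖ := norm_pos_iff.2 (sub_ne_zero.2 hz)
    have hbound : ‖z - ζ‖ ≤ R + ‖ζ‖ := by
      have : ‖z‖ ≤ R := by simpa [Complex.dist_eq] using hR hzG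
      calc ‖z - ζ‖ ≤ ‖z‖ + ‖ζ‖ := norm_sub_le z ζ
        _ ≤ R + ‖ζ‖ := by linarith
    rw [Real.norm_eq_abs]
    rcases le_or_gt ‖z - ζ‖ 1 with h1 | h1
    · have hlogle : Real.log ‖z - ζ‖ ≤ 0 := Real.log_nonpos hr.le h1
      rw [abs_of_nonpos hlogle, ← Real.log_inv]
      have : Real.log ‖z - ζ‖⁻¹ ≤ ‖z - ζ‖⁻¹ - 1 :=
        Real.log_le_sub_one_of_pos (by positivity)
      have hrz : (0:ℝ) ≤ R + ‖ζ‖ := by positivity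
      linarith
    · rw [abs_of_nonneg (Real.log_nonneg h1.le)]
      have : Real.log ‖z - ζ‖ ≤ ‖z - ζ‖ - 1 := Real.log_le_sub_one_of_pos hr
      have hrinv : (0:ℝ) ≤ ‖z - ζ‖⁻¹ := by positivity
      linarith

lemma grav_lip (G : Set ℂ) (hGm : MeasurableSet G) (hGb : Bornology.IsBounded G)
    (S : ℝ) (hS0 : 0 < S) (hS : volume G = ENNReal.ofReal S) :
    LipschitzWith (Real.sqrt (S / Real.pi)).toNNReal (gravPotential G) := by
  have hπ := Real.pi_pos
  apply LipschitzWith.of_dist_le_mul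
  intro ζ₁ ζ₂
  rcases eq_or_ne ζ₁ ζ₂ with rfl | hne
  · simp
  set d := ζ₁ - ζ₂ with hd
  have hd0 : d ≠ 0 := sub_ne_zero.2 hne
  have hint1 := log_integrable G hGm hGb S hS0 hS ζ₁
  have hint2 := log_integrable G hGm hGb S hS0 hS ζ₂
  have habs : ∀ ζ : ℂ, gravPotential G ζ = (1/(2*Real.pi)) * ∫ z in G, Real.log ‖z - ζ‖ := by
    intro ζ; unfold gravPotential; congr 1
  set diff : ℂ → ℝ := fun z => Real.log ‖z - ζ₁‖ - Real.log ‖z - ζ₂‖ with hdiff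
  have hdiffint : IntegrableOn diff G := hint1.sub hint2
  have hX : ∫ z in G, |diff z| ≤ ‖d‖ * (2 * Real.sqrt (Real.pi * S)) := by
    set M : ℝ := ‖d‖ * (2 * Real.sqrt (Real.pi * S)) with hM
    have hM0 : 0 ≤ M := by positivity
    rw [← ENNReal.ofReal_le_ofReal_iff hM0]
    rw [ofReal_integral_eq_lintegral_ofReal hdiffint.abs
      (Filter.Eventually.of_forall fun z => abs_nonneg _)]
    set F : ℂ → ℝ → ENNReal := fun z t => ENNReal.ofReal (‖d‖ * ‖z - ζ₂ - t • d‖⁻¹) with hF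
    have hcontF : Continuous fun p : ℂ × ℝ => ‖p.1 - ζ₂ - p.2 • d‖ := by fun_prop
    have hmF : Measurable (Function.uncurry F) :=
      (measurable_const.mul hcontF.measurable.inv).ennreal_ofReal
    have step1 : ∫⁻ z in G, ENNReal.ofReal |diff z|
        ≤ ∫⁻ z in G, ∫⁻ t in Ioc (0:ℝ) 1, F z t := by
      refine lintegral_mono_ae ?_
      have hae : ∀ᵐ z : ℂ ∂volume.restrict G,
          ∀ t ∈ Set.Icc (0:ℝ) 1, z - ζ₂ - t • d ≠ 0 := by
        refine Filter.Eventually.filter_mono (ae_mono Measure.restrict_le_self) ?_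
        rw [ae_iff]
        refine measure_mono_null (fun z hz => ?_) (segment_null ζ₂ d hd0)
        simp only [mem_setOf_eq] at hz ⊢
        push_neg at hz
        obtain ⟨t, ht, hzt⟩ := hz
        exact ⟨t, ht, hzt⟩
      filter_upwards [hae] with z hz
      have h1 : |diff z| ≤ ∫ t in (0:ℝ)..1, ‖d‖ * ‖(z - ζ₂) - t • d‖⁻¹ := by
        have := logBound (z - ζ₂) d hz
        have he : z - ζ₂ - d = z - ζ₁ := by rw [hd]; ring
        rw [he] at this
        exact this
      have h2 : ∫ t in (0:ℝ)..1, ‖d‖ * ‖(z - ζ₂) - t • d‖⁻¹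
          = ∫ t in Ioc (0:ℝ) 1, ‖d‖ * ‖(z - ζ₂) - t • d‖⁻¹ :=
        intervalIntegral.integral_of_le zero_le_one
      have hcont : ContinuousOn (fun t : ℝ => ‖d‖ * ‖(z - ζ₂) - t • d‖⁻¹) (Icc 0 1) := by
        refine continuousOn_const.mul (ContinuousOn.inv₀ (by fun_prop) fun t ht => ?_)
        exact norm_ne_zero_iff.2 (hz t ht)
      have hintegr : IntegrableOn (fun t : ℝ => ‖d‖ * ‖(z - ζ₂) - t • d‖⁻¹) (Ioc 0 1) :=
        (hcont.integrableOn_Icc).mono_set Ioc_subset_Icc_self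
      calc ENNReal.ofReal |diff z|
          ≤ ENNReal.ofReal (∫ t in Ioc (0:ℝ) 1, ‖d‖ * ‖(z - ζ₂) - t • d‖⁻¹) :=
            ENNReal.ofReal_le_ofReal (h2 ▸ h1)
        _ = ∫⁻ t in Ioc (0:ℝ) 1, F z t := by
            rw [ofReal_integral_eq_lintegral_ofReal hintegr
              (Filter.Eventually.of_forall fun t => by positivity)]
    have step2 : ∫⁻ z in G, ∫⁻ t in Ioc (0:ℝ) 1, F z t
        = ∫⁻ t in Ioc (0:ℝ) 1, ∫⁻ z in G, F z t :=
      lintegral_lintegral_swap hmF.aemeasurable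
    have step3 : ∀ t : ℝ, ∫⁻ z in G, F z t ≤ ENNReal.ofReal M := by
      intro t
      have : ∀ z : ℂ, F z t = ENNReal.ofReal ‖d‖ * ENNReal.ofReal (‖z - (ζ₂ + t • d)‖⁻¹) := by
        intro z
        simp only [hF]
        rw [sub_sub, ENNReal.ofReal_mul (norm_nonneg d)]
      calc ∫⁻ z in G, F z t
          = ∫⁻ z in G, ENNReal.ofReal ‖d‖ * ENNReal.ofReal (‖z - (ζ₂ + t • d)‖⁻¹) :=
            lintegral_congr this
        _ = ENNReal.ofReal ‖d‖ * ∫⁻ z in G, ENNReal.ofReal (‖z - (ζ₂ + t • d)‖⁻¹) :=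
            lintegral_const_mul _ (((measurable_id.sub_const (ζ₂ + t • d)).norm.inv).ennreal_ofReal)
        _ ≤ ENNReal.ofReal ‖d‖ * ENNReal.ofReal (2 * Real.sqrt (Real.pi * S)) :=
            mul_le_mul_right (keyA G S hS0 hS _) _
        _ = ENNReal.ofReal M := by rw [hM, ENNReal.ofReal_mul (norm_nonneg d)]
    calc ∫⁻ z in G, ENNReal.ofReal |diff z|
        ≤ ∫⁻ t in Ioc (0:ℝ) 1, ∫⁻ z in G, F z t := step1.trans step2.le
      _ ≤ ∫⁻ _t in Ioc (0:ℝ) 1, ENNReal.ofReal M :=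
          setLIntegral_mono measurable_const fun t _ => step3 t
      _ = ENNReal.ofReal M := by simp [Real.volume_Ioc]
  have hdist : dist (gravPotential G ζ₁) (gravPotential G ζ₂)
      ≤ (1/(2*Real.pi)) * (‖d‖ * (2 * Real.sqrt (Real.pi * S))) := by
    rw [Real.dist_eq, habs ζ₁, habs ζ₂, ← mul_sub,
      ← integral_sub hint1 hint2, abs_mul]
    rw [abs_of_pos (by positivity : (0:ℝ) < 1/(2*Real.pi))]
    refine mul_le_mul_of_nonneg_left ?_ (by positivity)
    calc |∫ z in G, (Real.log ‖z - ζ₁‖ - Real.log ‖z - ζ₂‖)|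
        ≤ ∫ z in G, |diff z| := by
          simpa [hdiff] using norm_integral_le_integral_norm
            (μ := volume.restrict G) (f := diff)
      _ ≤ ‖d‖ * (2 * Real.sqrt (Real.pi * S)) := hX
  have hKey : Real.sqrt (S / Real.pi) = Real.sqrt (Real.pi * S) / Real.pi := by
    rw [show S / Real.pi = (Real.pi * S) / Real.pi ^ 2 by field_simp,
      Real.sqrt_div (by positivity), Real.sqrt_sq hπ.le]
  have hcoe : ((Real.sqrt (S / Real.pi)).toNNReal : ℝ) = Real.sqrt (S / Real.pi) :=
    Real.coe_toNNReal _ (Real.sqrt_nonneg _)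
  have hdζ : dist ζ₁ ζ₂ = ‖d‖ := by rw [dist_eq_norm, hd]
  rw [hcoe, hdζ]
  calc dist (gravPotential G ζ₁) (gravPotential G ζ₂)
      ≤ (1/(2*Real.pi)) * (‖d‖ * (2 * Real.sqrt (Real.pi * S))) := hdist
    _ = (Real.sqrt (Real.pi * S) / Real.pi) * ‖d‖ := by field_simp
    _ = Real.sqrt (S / Real.pi) * ‖d‖ := by rw [hKey]

/-- Let `G ⊆ ℂ` be a bounded measurable set of area `S`. Then for every point `ζ ∈ ℂ`,
the gradient of the gravity potential satisfies `|∇Π_G(ζ)| ≤ √(S/π)`. -/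
theorem norm_gradient_gravPotential_le
    (G : Set ℂ) (hGm : MeasurableSet G) (hGb : Bornology.IsBounded G)
    (S : ℝ) (hS : volume G = ENNReal.ofReal S) (ζ : ℂ) :
    ‖gradient (gravPotential G) ζ‖ ≤ Real.sqrt (S / Real.pi) := by
  by_cases hS0 : 0 < S
  · have hlip := grav_lip G hGm hGb S hS0 hS
    have hnorm : ‖gradient (gravPotential G) ζ‖ = ‖fderiv ℝ (gravPotential G) ζ‖ := by
      rw [gradient]
      exact LinearIsometryEquiv.norm_map _ _
    rw [hnorm]
    have h := norm_fderiv_le_of_lipschitz (x₀ := ζ) ℝ hlip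
    rwa [Real.coe_toNNReal _ (Real.sqrt_nonneg _)] at h
  · have hvol : volume G = 0 := by
      rw [hS, ENNReal.ofReal_eq_zero.2 (not_lt.1 hS0)]
    have hconst : gravPotential G = fun _ => (0:ℝ) := by
      funext w
      unfold gravPotential
      rw [Measure.restrict_eq_zero.2 hvol, integral_zero_measure, mul_zero]
    rw [hconst, gradient_fun_const]
    simp only [norm_zero]
    exact Real.sqrt_nonneg (S / Real.pi)
end

section
/- Let G ⊆ ℂ be a measurable set of finite positive area S, let ζ ∈ ℂ, and let K be the open disk centered at ζ of area S (i.e. of radius √(S/π)). Then ∫_G |ζ − z|⁻¹ dA(z) ≤ ∫_K |ζ − z|⁻¹ dA(z) = 2√(πS). -/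
open MeasureTheory Set ENNReal NNReal

private lemma hpi_coe : (NNReal.pi : ℝ≥0∞) = ENNReal.ofReal Real.pi := by
  rw [← ENNReal.ofReal_coe_nnreal, NNReal.coe_real_pi]

private lemma ball_lintegral (ζ : ℂ) (r : ℝ) (hr : 0 < r) :
    (∫⁻ z in Metric.ball ζ r, ENNReal.ofReal (‖ζ - z‖)⁻¹) =
      ENNReal.ofReal (2 * Real.pi * r) := by
  have hfm : Measurable fun z : ℂ => (‖ζ - z‖)⁻¹ :=
    ((continuous_norm.comp (continuous_const.sub continuous_id)).measurable).inv
  rw [lintegral_eq_lintegral_meas_lt _ (Filter.Eventually.of_forall fun z => by positivity)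
    hfm.aemeasurable]
  have hset : ∀ t ∈ Ioi (0:ℝ),
      (volume.restrict (Metric.ball ζ r)) {z : ℂ | t < (‖ζ - z‖)⁻¹}
        = ENNReal.ofReal (min r t⁻¹) ^ 2 * NNReal.pi := by
    intro t ht
    have ht : (0:ℝ) < t := ht
    have hkey : {z : ℂ | t < (‖ζ - z‖)⁻¹} = Metric.ball ζ t⁻¹ \ {ζ} := by
      ext z
      rcases eq_or_ne z ζ with h | h
      · simp [h, ht.asymm]
      · have ha : 0 < ‖ζ - z‖ :=
          norm_pos_iff.2 (sub_ne_zero.2 (Ne.symm h))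
        simp only [Set.mem_setOf_eq, Set.mem_diff, Metric.mem_ball, Set.mem_singleton_iff, h,
          not_false_iff, and_true, Complex.dist_eq]
        rw [lt_inv_comm₀ ht ha, norm_sub_rev]
    rw [hkey, Measure.restrict_apply (Metric.isOpen_ball.measurableSet.diff
      (measurableSet_singleton ζ))]
    have : Metric.ball ζ t⁻¹ \ {ζ} ∩ Metric.ball ζ r = Metric.ball ζ (min r t⁻¹) \ {ζ} := by
      ext z; simp only [Set.mem_inter_iff, Set.mem_diff, Metric.mem_ball, lt_min_iff,
        Set.mem_singleton_iff]
      tauto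
    rw [this, measure_diff_null (measure_singleton ζ), Complex.volume_ball]
  rw [setLIntegral_congr_fun measurableSet_Ioi hset]
  have hsplit : Ioi (0:ℝ) = Ioc 0 r⁻¹ ∪ Ioi r⁻¹ :=
    (Ioc_union_Ioi_eq_Ioi (by positivity)).symm
  rw [hsplit, lintegral_union measurableSet_Ioi (Ioc_disjoint_Ioi le_rfl)]
  have h1 : (∫⁻ t in Ioc (0:ℝ) r⁻¹, ENNReal.ofReal (min r t⁻¹) ^ 2 * NNReal.pi)
      = ENNReal.ofReal (Real.pi * r) := by
    rw [setLIntegral_congr_fun measurableSet_Ioc (id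
      (fun t ht => by
        have : r ≤ t⁻¹ := (le_inv_comm₀ hr ht.1).mpr ht.2
        rw [min_eq_left this] : ∀ t ∈ Ioc (0:ℝ) r⁻¹,
          ENNReal.ofReal (min r t⁻¹) ^ 2 * NNReal.pi = ENNReal.ofReal r ^ 2 * NNReal.pi))]
    rw [setLIntegral_const, Real.volume_Ioc, hpi_coe, ← ENNReal.ofReal_pow hr.le,
      ← ENNReal.ofReal_mul (by positivity), ← ENNReal.ofReal_mul (by positivity)]
    congr 1
    field_simp
    ring
  have h2 : (∫⁻ t in Ioi r⁻¹, ENNReal.ofReal (min r t⁻¹) ^ 2 * NNReal.pi)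
      = ENNReal.ofReal (Real.pi * r) := by
    rw [setLIntegral_congr_fun measurableSet_Ioi (id
      (fun t ht => by
        have ht0 : (0:ℝ) < t := lt_trans (by positivity) ht
        have hlt : t⁻¹ < r := (inv_lt_comm₀ ht0 hr).mpr ht
        have key : t ^ (-2:ℝ) = (t⁻¹)^2 := by
          rw [show (-2:ℝ) = -((2:ℕ):ℝ) by norm_num, Real.rpow_neg ht0.le,
            Real.rpow_natCast, inv_pow]
        rw [min_eq_right hlt.le, ← ENNReal.ofReal_pow (by positivity), ← key] :
        ∀ t ∈ Ioi r⁻¹,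
          ENNReal.ofReal (min r t⁻¹) ^ 2 * NNReal.pi
            = ENNReal.ofReal (t ^ (-2:ℝ)) * NNReal.pi))]
    rw [lintegral_mul_const' _ _ (by simp)]
    have hint : IntegrableOn (fun t : ℝ => t ^ (-2:ℝ)) (Ioi r⁻¹) :=
      integrableOn_Ioi_rpow_of_lt (by norm_num) (by positivity)
    rw [← ofReal_integral_eq_lintegral_ofReal hint
      ((ae_restrict_iff' measurableSet_Ioi).2 (Filter.Eventually.of_forall fun t ht =>
        Real.rpow_nonneg (le_of_lt (lt_trans (by positivity) ht)) _))]
    rw [integral_Ioi_rpow_of_lt (by norm_num) (by positivity)]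
    norm_num
    rw [Real.rpow_neg_one, inv_inv, hpi_coe, ← ENNReal.ofReal_mul (by positivity), mul_comm]
  rw [h1, h2, ← ENNReal.ofReal_add (by positivity) (by positivity)]
  congr 1
  ring

/-- Let `G ⊆ ℂ` be a measurable set of finite positive area `S`, let `ζ ∈ ℂ`, and let `K` be
the open disk centered at `ζ` of area `S` (i.e. of radius `√(S/π)`). Then
`∫_G |ζ − z|⁻¹ dA(z) ≤ ∫_K |ζ − z|⁻¹ dA(z) = 2√(πS)`. -/
theorem lintegral_inv_dist_le_ball
    (G : Set ℂ) (hGm : MeasurableSet G) (S : ℝ) (hS : 0 < S)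
    (hSG : volume G = ENNReal.ofReal S) (ζ : ℂ) :
    (∫⁻ z in G, ENNReal.ofReal (‖ζ - z‖)⁻¹) ≤
        (∫⁻ z in Metric.ball ζ (Real.sqrt (S / Real.pi)),
          ENNReal.ofReal (‖ζ - z‖)⁻¹) ∧
      (∫⁻ z in Metric.ball ζ (Real.sqrt (S / Real.pi)),
          ENNReal.ofReal (‖ζ - z‖)⁻¹) =
        ENNReal.ofReal (2 * Real.sqrt (Real.pi * S)) := by
  set r : ℝ := Real.sqrt (S / Real.pi) with hr_def
  have hr : 0 < r := Real.sqrt_pos.mpr (by positivity)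
  set K : Set ℂ := Metric.ball ζ r with hK_def
  have hKm : MeasurableSet K := Metric.isOpen_ball.measurableSet
  have hval : (∫⁻ z in K, ENNReal.ofReal (‖ζ - z‖)⁻¹) =
      ENNReal.ofReal (2 * Real.sqrt (Real.pi * S)) := by
    rw [ball_lintegral ζ r hr]
    congr 1
    rw [hr_def, Real.sqrt_div hS.le, Real.sqrt_mul Real.pi_pos.le]
    have h2 : Real.sqrt Real.pi ≠ 0 := by positivity
    have h3 : Real.sqrt Real.pi * Real.sqrt Real.pi = Real.pi :=
      Real.mul_self_sqrt Real.pi_pos.le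
    field_simp
    nlinarith [Real.sqrt_nonneg S]
  refine ⟨?_, hval⟩
  -- volume of K is S
  have hK : volume K = ENNReal.ofReal S := by
    rw [hK_def, Complex.volume_ball, hpi_coe, ← ENNReal.ofReal_pow (Real.sqrt_nonneg _),
      Real.sq_sqrt (by positivity), ← ENNReal.ofReal_mul (by positivity),
      div_mul_cancel₀ _ Real.pi_ne_zero]
  have hfinGK : volume (G ∩ K) ≠ ⊤ :=
    ne_of_lt (lt_of_le_of_lt (measure_mono inter_subset_left)
      (by rw [hSG]; exact ENNReal.ofReal_lt_top))
  have hvol : volume (G \ K) = volume (K \ G) := by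
    have h1 : volume (G ∩ K) + volume (G \ K) = ENNReal.ofReal S := by
      rw [measure_inter_add_diff G hKm, hSG]
    have h2 : volume (G ∩ K) + volume (K \ G) = ENNReal.ofReal S := by
      rw [inter_comm, measure_inter_add_diff K hGm, hK]
    exact (ENNReal.add_right_inj hfinGK).1 (h1.trans h2.symm)
  have hGK : (∫⁻ z in G \ K, ENNReal.ofReal (‖ζ - z‖)⁻¹)
      ≤ ENNReal.ofReal r⁻¹ * volume (G \ K) := by
    rw [← setLIntegral_const]
    refine setLIntegral_mono' (hGm.diff hKm) fun z hz => ?_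
    have h1 : r ≤ ‖ζ - z‖ := by
      have := hz.2
      rw [hK_def, Metric.mem_ball, Complex.dist_eq, not_lt, norm_sub_rev] at this
      exact this
    exact ENNReal.ofReal_le_ofReal (inv_anti₀ hr h1)
  have hKG : ENNReal.ofReal r⁻¹ * volume (K \ G)
      ≤ ∫⁻ z in K \ G, ENNReal.ofReal (‖ζ - z‖)⁻¹ := by
    rw [← setLIntegral_const]
    refine lintegral_mono_ae ?_
    have h0 : ∀ᵐ z : ℂ ∂(volume.restrict (K \ G)), z ≠ ζ :=
      ae_restrict_of_ae (by simpa [ae_iff] using measure_singleton ζ)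
    filter_upwards [h0, ae_restrict_mem (hKm.diff hGm)] with z hne hz
    have hpos : 0 < ‖ζ - z‖ :=
      norm_pos_iff.2 (sub_ne_zero.2 (Ne.symm hne))
    have hlt : ‖ζ - z‖ < r := by
      have := hz.1
      rw [hK_def, Metric.mem_ball, Complex.dist_eq, norm_sub_rev] at this
      exact this
    exact ENNReal.ofReal_le_ofReal (inv_anti₀ hpos hlt.le)
  calc (∫⁻ z in G, ENNReal.ofReal (‖ζ - z‖)⁻¹)
      = (∫⁻ z in G ∩ K, ENNReal.ofReal (‖ζ - z‖)⁻¹)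
        + (∫⁻ z in G \ K, ENNReal.ofReal (‖ζ - z‖)⁻¹) :=
        (lintegral_inter_add_diff _ G hKm).symm
    _ ≤ (∫⁻ z in G ∩ K, ENNReal.ofReal (‖ζ - z‖)⁻¹)
        + ENNReal.ofReal r⁻¹ * volume (G \ K) := add_le_add_right hGK _
    _ = (∫⁻ z in K ∩ G, ENNReal.ofReal (‖ζ - z‖)⁻¹)
        + ENNReal.ofReal r⁻¹ * volume (K \ G) := by rw [inter_comm, hvol]
    _ ≤ (∫⁻ z in K ∩ G, ENNReal.ofReal (‖ζ - z‖)⁻¹)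
        + (∫⁻ z in K \ G, ENNReal.ofReal (‖ζ - z‖)⁻¹) := add_le_add_right hKG _
    _ = ∫⁻ z in K, ENNReal.ofReal (‖ζ - z‖)⁻¹ :=
        lintegral_inter_add_diff _ K hGm
end

section
/- For every integer n ≥ 1 and every θ ∈ ℝ, the imaginary part of the holomorphic (nonnegative-degree) part of (ζ + ζ⁻¹)^{2n−1} at ζ = e^{iθ} satisfies: Σ_{k=0}^{n−1} C(2n−1, k) · sin((2n−1−2k)θ) = 4^{n−1} · Q_{n−1}(cos²θ) · sin θ, where C(·,·) denotes the binomial coefficient. -/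
open Finset

/-- The polynomial `Q_m(u) = Σ_{k=0}^{m} ((2k)! / (4^k (k!)²)) u^{m−k}`. -/
noncomputable def Qpoly (m : ℕ) (u : ℝ) : ℝ :=
  ∑ k ∈ Finset.range (m + 1),
    ((Nat.factorial (2 * k) : ℝ) / (4 ^ k * (Nat.factorial k : ℝ) ^ 2)) * u ^ (m - k)

lemma two_cos_sin (θ a : ℝ) :
    2 * Real.cos θ * Real.sin (a * θ) =
      Real.sin ((a + 1) * θ) + Real.sin ((a - 1) * θ) := by
  rw [add_mul, sub_mul, one_mul, Real.sin_add, Real.sin_sub]; ring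

lemma conv (θ : ℝ) (N m : ℕ) :
    2 * Real.cos θ *
      ∑ k ∈ range (m + 1), (N.choose k : ℝ) * Real.sin (((N : ℝ) - 2 * k) * θ)
    = (∑ k ∈ range (m + 2),
        ((N + 1).choose k : ℝ) * Real.sin (((N : ℝ) + 1 - 2 * k) * θ))
      - (N.choose (m + 1) : ℝ) * Real.sin (((N : ℝ) + 1 - 2 * ((m : ℝ) + 1)) * θ) := by
  set f : ℕ → ℝ := fun k => Real.sin (((N : ℝ) + 1 - 2 * (k : ℝ)) * θ) with hf
  have key : ∀ k : ℕ, 2 * Real.cos θ * ((N.choose k : ℝ) * Real.sin (((N : ℝ) - 2 * k) * θ))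
      = (N.choose k : ℝ) * f k + (N.choose k : ℝ) * f (k + 1) := by
    intro k
    have h := two_cos_sin θ ((N : ℝ) - 2 * k)
    have e1 : ((N : ℝ) - 2 * k + 1) = (N : ℝ) + 1 - 2 * (k : ℝ) := by ring
    have e2 : ((N : ℝ) - 2 * k - 1) = (N : ℝ) + 1 - 2 * (((k + 1 : ℕ) : ℝ)) := by
      push_cast; ring
    rw [e1, e2] at h
    simp only [hf]
    rw [mul_comm (2 * Real.cos θ), mul_assoc, mul_comm _ (2 * Real.cos θ), h]
    ring
  rw [Finset.mul_sum]
  calc ∑ k ∈ range (m + 1), 2 * Real.cos θ * ((N.choose k : ℝ) * Real.sin (((N : ℝ) - 2 * k) * θ))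
      = ∑ k ∈ range (m + 1), ((N.choose k : ℝ) * f k + (N.choose k : ℝ) * f (k + 1)) :=
        Finset.sum_congr rfl fun k _ => key k
    _ = (∑ k ∈ range (m + 1), (N.choose k : ℝ) * f k)
        + ∑ k ∈ range (m + 1), (N.choose k : ℝ) * f (k + 1) := Finset.sum_add_distrib
    _ = (∑ k ∈ range (m + 2), ((N + 1).choose k : ℝ) * f k)
        - (N.choose (m + 1) : ℝ) * f (m + 1) := by
        rw [Finset.sum_range_succ' (fun k => ((N + 1).choose k : ℝ) * f k) (m + 1),
          Finset.sum_range_succ' (fun k => ((N.choose k : ℝ)) * f k) m]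
        simp only [Nat.choose_succ_succ, Nat.choose_zero_right, Nat.cast_add, add_mul]
        rw [Finset.sum_add_distrib,
          Finset.sum_range_succ (fun k => ((N.choose (k + 1) : ℝ)) * f (k + 1)) m]
        push_cast
        ring
    _ = _ := by norm_num [hf]

lemma Qpoly_succ (m : ℕ) (u : ℝ) :
    Qpoly (m + 1) u = u * Qpoly m u
      + (Nat.factorial (2 * (m + 1)) : ℝ) / (4 ^ (m + 1) * (Nat.factorial (m + 1) : ℝ) ^ 2) := by
  unfold Qpoly
  rw [Finset.sum_range_succ, Finset.mul_sum]
  congr 1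
  · refine Finset.sum_congr rfl fun k hk => ?_
    have hk' : k ≤ m := Nat.lt_succ_iff.mp (Finset.mem_range.mp hk)
    have : m + 1 - k = (m - k) + 1 := by omega
    rw [this, pow_succ]
    ring
  · simp

lemma central_binom_real (j : ℕ) :
    ((2 * j).choose j : ℝ) = (Nat.factorial (2 * j) : ℝ) / (Nat.factorial j : ℝ) ^ 2 := by
  have h := Nat.choose_mul_factorial_mul_factorial
    (Nat.le_mul_of_pos_left j (by norm_num) : j ≤ 2 * j)
  have h2 : 2 * j - j = j := by omega
  rw [h2] at h
  have hj : (Nat.factorial j : ℝ) ≠ 0 := Nat.cast_ne_zero.mpr (Nat.factorial_ne_zero j)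
  field_simp
  rw [← h]
  push_cast
  ring

lemma aux (θ : ℝ) (m : ℕ) :
    ∑ k ∈ range (m + 1),
        ((2 * m + 1).choose k : ℝ) * Real.sin ((2 * (m : ℝ) + 1 - 2 * (k : ℝ)) * θ)
      = 4 ^ m * Qpoly m (Real.cos θ ^ 2) * Real.sin θ := by
  induction m with
  | zero => simp [Qpoly]
  | succ m ih =>
    -- step 1: odd (2m+1) → even (2m+2)
    have h1 := conv θ (2 * m + 1) m
    have tail1 : (((2 * m + 1 : ℕ) : ℝ) + 1 - 2 * ((m : ℝ) + 1)) = 0 := by push_cast; ring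
    rw [tail1, zero_mul, Real.sin_zero, mul_zero, sub_zero] at h1
    have e1 : (∑ k ∈ range (m + 1),
          ((2 * m + 1).choose k : ℝ) * Real.sin ((((2 * m + 1 : ℕ) : ℝ) - 2 * k) * θ))
        = ∑ k ∈ range (m + 1),
          ((2 * m + 1).choose k : ℝ) * Real.sin ((2 * (m : ℝ) + 1 - 2 * (k : ℝ)) * θ) := by
      refine Finset.sum_congr rfl fun k _ => ?_
      congr 3
      push_cast; ring
    rw [e1] at h1
    -- h1 : 2 cos θ * S = E  (with E written with ((2m+1 : ℕ):ℝ)+1 - 2k inside)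
    -- step 2: even (2m+2) → odd (2m+3)
    have h2 := conv θ (2 * m + 2) (m + 1)
    have e2 : (∑ k ∈ range (m + 1 + 1),
          ((2 * m + 2).choose k : ℝ) * Real.sin ((((2 * m + 2 : ℕ) : ℝ) - 2 * k) * θ))
        = ∑ k ∈ range (m + 2),
          ((2 * m + 1 + 1).choose k : ℝ) * Real.sin ((((2 * m + 1 : ℕ) : ℝ) + 1 - 2 * k) * θ) := by
      refine Finset.sum_congr rfl fun k _ => ?_
      rw [show 2 * m + 1 + 1 = 2 * m + 2 by omega]
      have harg : (((2 * m + 2 : ℕ)) : ℝ) - 2 * (k : ℝ)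
          = (((2 * m + 1 : ℕ)) : ℝ) + 1 - 2 * (k : ℝ) := by push_cast; ring
      rw [harg]
    rw [e2, ← h1] at h2
    have tail2 : ((((2 * m + 2 : ℕ)) : ℝ) + 1 - 2 * (((m + 1 : ℕ) : ℝ) + 1)) * θ
        = (-1) * θ := by push_cast; ring
    rw [tail2] at h2
    have hs3 : ∑ k ∈ range (m + 1 + 2),
        ((2 * m + 2 + 1).choose k : ℝ) * Real.sin ((((2 * m + 2 : ℕ) : ℝ) + 1 - 2 * k) * θ)
        = (∑ k ∈ range (m + 2),
            ((2 * (m + 1) + 1).choose k : ℝ)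
              * Real.sin ((2 * ((m : ℝ) + 1) + 1 - 2 * (k : ℝ)) * θ))
          + ((2 * m + 3).choose (m + 2) : ℝ) * Real.sin ((-1) * θ) := by
      rw [show m + 1 + 2 = (m + 2) + 1 from rfl, Finset.sum_range_succ]
      congr 1
      · refine Finset.sum_congr rfl fun k _ => ?_
        have : 2 * m + 2 + 1 = 2 * (m + 1) + 1 := by ring
        rw [this]
        congr 3
        push_cast; ring
      · have : 2 * m + 2 + 1 = 2 * m + 3 := rfl
        rw [this]
        congr 2
        push_cast; ring
    rw [hs3] at h2
    -- now h2 : 2cos θ * (2cos θ * S) = (goal sum) + C(2m+3,m+2) sin(-θ) - C(2m+2,m+2) sin(-θ)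
    have hc : ((2 * m + 3).choose (m + 2) : ℝ)
        = ((2 * m + 2).choose (m + 1) : ℝ) + ((2 * m + 2).choose (m + 2) : ℝ) := by
      rw [show (2 * m + 3) = (2 * m + 2) + 1 from rfl, show (m + 2) = (m + 1) + 1 from rfl,
        Nat.choose_succ_succ]
      push_cast; ring
    have hgoalsum : (∑ k ∈ range (m + 2),
          ((2 * (m + 1) + 1).choose k : ℝ)
            * Real.sin ((2 * ((m : ℝ) + 1) + 1 - 2 * (k : ℝ)) * θ))
        = 4 * Real.cos θ ^ 2 *
            (∑ k ∈ range (m + 1),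
              ((2 * m + 1).choose k : ℝ) * Real.sin ((2 * (m : ℝ) + 1 - 2 * (k : ℝ)) * θ))
          + ((2 * m + 2).choose (m + 1) : ℝ) * Real.sin θ := by
      have hneg : Real.sin ((-1) * θ) = -Real.sin θ := by
        rw [neg_one_mul, Real.sin_neg]
      rw [hneg, hc] at h2
      nlinarith [h2]
    -- final assembly
    have hcb : ((2 * m + 2).choose (m + 1) : ℝ)
        = 4 ^ (m + 1) *
          ((Nat.factorial (2 * (m + 1)) : ℝ) / (4 ^ (m + 1) * (Nat.factorial (m + 1) : ℝ) ^ 2)) := by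
      have := central_binom_real (m + 1)
      rw [show 2 * (m + 1) = 2 * m + 2 from by ring] at this
      rw [this, show 2 * (m + 1) = 2 * m + 2 from by ring]
      have h4 : (4 : ℝ) ^ (m + 1) ≠ 0 := by positivity
      field_simp
    have goalcast : ∑ k ∈ range (m + 1 + 1),
        ((2 * (m + 1) + 1).choose k : ℝ)
          * Real.sin ((2 * ((m + 1 : ℕ) : ℝ) + 1 - 2 * (k : ℝ)) * θ)
        = ∑ k ∈ range (m + 2),
        ((2 * (m + 1) + 1).choose k : ℝ)
          * Real.sin ((2 * ((m : ℝ) + 1) + 1 - 2 * (k : ℝ)) * θ) := by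
      refine Finset.sum_congr rfl fun k _ => ?_
      congr 3
      push_cast; ring
    rw [goalcast, hgoalsum, ih, Qpoly_succ, hcb]
    ring

/-- For every integer `n ≥ 1` and every `θ ∈ ℝ`, the imaginary part of the
nonnegative-degree (holomorphic) part of `(ζ + ζ⁻¹)^{2n−1}` at `ζ = e^{iθ}` satisfies
`Σ_{k=0}^{n−1} C(2n−1, k) sin((2n−1−2k)θ) = 4^{n−1} Q_{n−1}(cos²θ) sin θ`. -/
theorem im_holPart_eq_Qpoly (n : ℕ) (hn : 1 ≤ n) (θ : ℝ) :
    ∑ k ∈ Finset.range n,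
        (Nat.choose (2 * n - 1) k : ℝ) *
          Real.sin ((2 * (n : ℝ) - 1 - 2 * (k : ℝ)) * θ) =
      4 ^ (n - 1) * Qpoly (n - 1) (Real.cos θ ^ 2) * Real.sin θ := by
  obtain ⟨m, rfl⟩ : ∃ m, n = m + 1 := ⟨n - 1, by omega⟩
  have h := aux θ m
  have hsub : 2 * (m + 1) - 1 = 2 * m + 1 := by omega
  have hsub2 : m + 1 - 1 = m := by omega
  rw [hsub, hsub2, ← h]
  refine Finset.sum_congr rfl fun k _ => ?_
  congr 3
  push_cast; ring
end

section
/- Let q > 0, 0 < b < 1, ε > 0, and let A : (0, ε) → (0, 1) be a function satisfying the implicit equation A(τ)·log A(τ) − A(τ) = 2q·τ·log b for all τ ∈ (0, ε), with A(τ) → 0 as τ → 0⁺. Then A(τ) ∼ 2q·τ·log(b) / log(τ) as τ → 0⁺, i.e. the ratio A(τ)·log(τ) / (2q·τ·log b) tends to 1 as τ → 0⁺. (This expresses the logarithmically slow rate of contraction of the smaller of two bubbles near its partial contraction time.) -/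
open Filter Topology

lemma aux_limit (C : ℝ) :
    Tendsto (fun L : ℝ => (L + Real.log (1 - L) - C) / (L - 1)) atBot (𝓝 1) := by
  have hneg : ∀ᶠ L : ℝ in atBot, L < 0 := eventually_lt_atBot 0
  have hinv : Tendsto (fun L : ℝ => 1 / L) atBot (𝓝 0) := by
    have h1 : Tendsto (fun L : ℝ => -L) atBot atTop := tendsto_neg_atBot_atTop
    have h2 := h1.inv_tendsto_atTop
    have h3 : Tendsto (fun L : ℝ => -(-L)⁻¹) atBot (𝓝 (-0)) := h2.neg
    refine (h3.congr (fun L => by field_simp)).mono_right (by norm_num)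
  -- log(1-L)/L → 0
  have hlog1 : Tendsto (fun L : ℝ => Real.log (1 - L) / (1 - L)) atBot (𝓝 0) := by
    have h := Real.isLittleO_log_id_atTop.tendsto_div_nhds_zero
    have hcomp : Tendsto (fun L : ℝ => 1 - L) atBot atTop :=
      tendsto_atTop_add_const_left _ 1 tendsto_neg_atBot_atTop
    exact h.comp hcomp
  have hrat : Tendsto (fun L : ℝ => (1 - L) / L) atBot (𝓝 (-1)) := by
    have h : Tendsto (fun L : ℝ => 1 / L - 1) atBot (𝓝 (-1)) := by
      simpa using hinv.sub tendsto_const_nhds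
    refine h.congr' ?_
    filter_upwards [hneg] with L hL
    rw [sub_div, div_self (ne_of_lt hL)]
  have hlogL : Tendsto (fun L : ℝ => Real.log (1 - L) / L) atBot (𝓝 0) := by
    have h := hlog1.mul hrat
    rw [zero_mul] at h
    refine h.congr' ?_
    filter_upwards [hneg] with L hL
    have h1 : (1 : ℝ) - L ≠ 0 := by linarith
    field_simp
  have hCL : Tendsto (fun L : ℝ => C / L) atBot (𝓝 0) := by
    have := hinv.const_mul C
    simpa [div_eq_mul_inv] using this
  have hnum : Tendsto (fun L : ℝ => 1 + Real.log (1 - L) / L - C / L) atBot (𝓝 1) := by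
    have h := ((tendsto_const_nhds : Tendsto (fun _ : ℝ => (1:ℝ)) atBot (𝓝 1)).add hlogL).sub hCL
    simpa using h
  have hden : Tendsto (fun L : ℝ => 1 - 1 / L) atBot (𝓝 1) := by
    have h := (tendsto_const_nhds : Tendsto (fun _ : ℝ => (1:ℝ)) atBot (𝓝 1)).sub hinv
    simpa using h
  have h := hnum.div hden one_ne_zero
  rw [div_one] at h
  refine h.congr' ?_
  filter_upwards [hneg] with L hL
  have h0 : L ≠ 0 := ne_of_lt hL
  have h1 : L - 1 ≠ 0 := by linarith
  rw [Pi.div_apply]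
  field_simp

/-- Let `q > 0`, `0 < b < 1`, `ε > 0`, and let `A : (0,ε) → (0,1)` satisfy
`A(τ) log A(τ) − A(τ) = 2qτ log b` with `A(τ) → 0` as `τ → 0⁺`. Then
`A(τ) ∼ 2qτ log b / log τ` as `τ → 0⁺`, i.e. the ratio
`A(τ) log τ / (2qτ log b)` tends to `1`. (Logarithmically slow contraction of the
smaller bubble near its partial contraction time.) -/
theorem logarithmically_slow_contraction
    (q b ε : ℝ) (hq : 0 < q) (hb0 : 0 < b) (hb1 : b < 1) (hε : 0 < ε)
    (A : ℝ → ℝ)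
    (hA : ∀ τ ∈ Set.Ioo 0 ε, A τ ∈ Set.Ioo (0 : ℝ) 1)
    (heq : ∀ τ ∈ Set.Ioo 0 ε,
      A τ * Real.log (A τ) - A τ = 2 * q * τ * Real.log b)
    (hlim : Tendsto A (𝓝[>] 0) (𝓝 0)) :
    Tendsto (fun τ => A τ * Real.log τ / (2 * q * τ * Real.log b))
      (𝓝[>] 0) (𝓝 1) := by
  have hlogb : Real.log b < 0 := Real.log_neg hb0 hb1
  set K : ℝ := 2 * q * (-Real.log b) with hK
  have hKpos : 0 < K := by
    have h1 : 0 < -Real.log b := neg_pos.mpr hlogb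
    rw [hK]; positivity
  set C : ℝ := Real.log K with hC
  have hmem : ∀ᶠ τ in 𝓝[>] (0:ℝ), τ ∈ Set.Ioo 0 ε := by
    have : Set.Ioo (0:ℝ) ε ∈ 𝓝[>] (0:ℝ) :=
      Ioo_mem_nhdsGT_of_mem (by simp [le_refl, hε])
    exact this
  -- log ∘ A → atBot
  have hApos : Tendsto A (𝓝[>] 0) (𝓝[>] 0) := by
    refine tendsto_nhdsWithin_of_tendsto_nhds_of_eventually_within A hlim ?_
    filter_upwards [hmem] with τ hτ
    exact (hA τ hτ).1
  have hlogA : Tendsto (fun τ => Real.log (A τ)) (𝓝[>] 0) atBot :=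
    Real.tendsto_log_nhdsGT_zero.comp hApos
  have hmain := (aux_limit C).comp hlogA
  refine hmain.congr' ?_
  filter_upwards [hmem] with τ hτ
  obtain ⟨hτ0, hτε⟩ := hτ
  obtain ⟨hA0, hA1⟩ := hA τ ⟨hτ0, hτε⟩
  have hL : Real.log (A τ) < 0 := Real.log_neg hA0 hA1
  set L := Real.log (A τ) with hLdef
  have hA0' : A τ ≠ 0 := ne_of_gt hA0
  have h1L : (0:ℝ) < 1 - L := by linarith
  -- A τ * (1 - L) = K * τ
  have hprod : A τ * (1 - L) = K * τ := by
    have := heq τ ⟨hτ0, hτε⟩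
    rw [hK]; nlinarith [this]
  -- take logs
  have hlogτ : Real.log τ = L + Real.log (1 - L) - C := by
    have h1 : Real.log (A τ * (1 - L)) = L + Real.log (1 - L) :=
      Real.log_mul hA0' (ne_of_gt h1L)
    have h2 : Real.log (K * τ) = C + Real.log τ :=
      Real.log_mul (ne_of_gt hKpos) (ne_of_gt hτ0)
    rw [hprod, h2] at h1
    linarith
  have hdenom : 2 * q * τ * Real.log b = A τ * (L - 1) := by
    have := heq τ ⟨hτ0, hτε⟩
    linarith [this]
  simp only [Function.comp]
  rw [hdenom, hlogτ, mul_div_mul_left _ _ hA0']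
end

section
/- Let β > 0. There exists A₀ > 0 such that for every A with 0 < A < A₀, the function f(ζ) = A·ζ⁻¹ + (A/(1 + 6βA²))·ζ − 2βA³·ζ³ is injective on the punctured open unit disk {ζ ∈ ℂ : 0 < |ζ| < 1}. (This f is the conformal map from the unit disk to the exterior of a bubble whose gravity potential near the contraction point is y²/2 + β·Re(z⁴)/4.) -/
set_option maxHeartbeats 2000000 in
/-- Let `β > 0`. There exists `A₀ > 0` such that for every `0 < A < A₀` the function
`f(ζ) = A ζ⁻¹ + (A/(1 + 6βA²)) ζ − 2βA³ ζ³` is injective on the punctured open unit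
disk `{ζ : 0 < |ζ| < 1}`. This `f` is the conformal map from the unit disk to the
exterior of a bubble whose gravity potential near the contraction point is
`y²/2 + β Re(z⁴)/4`. -/
theorem univalent_conformal_map_small_A (β : ℝ) (hβ : 0 < β) :
    ∃ A₀ : ℝ, 0 < A₀ ∧ ∀ A : ℝ, 0 < A → A < A₀ →
      Set.InjOn
        (fun ζ : ℂ => (A : ℂ) * ζ⁻¹ + ((A : ℂ) / (1 + 6 * (β : ℂ) * (A : ℂ) ^ 2)) * ζ
          - 2 * (β : ℂ) * (A : ℂ) ^ 3 * ζ ^ 3)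
        {ζ : ℂ | 0 < ‖ζ‖ ∧ ‖ζ‖ < 1} := by
  refine ⟨Real.sqrt (1/(40*β)), Real.sqrt_pos.mpr (by positivity), ?_⟩
  intro A hA hA' ζ₁ h₁ ζ₂ h₂ hf
  by_contra hne
  obtain ⟨h1p, h1l⟩ := h₁
  obtain ⟨h2p, h2l⟩ := h₂
  have hz1 : ζ₁ ≠ 0 := by simpa using (norm_pos_iff.mp h1p)
  have hz2 : ζ₂ ≠ 0 := by simpa using (norm_pos_iff.mp h2p)
  have hp : 0 < β * A ^ 2 := by positivity
  have hp40 : β * A ^ 2 < 1/40 := by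
    have h := (Real.lt_sqrt hA.le).mp hA'
    have h2 : β * A ^ 2 < β * (1/(40*β)) := (mul_lt_mul_iff_right₀ hβ).mpr h
    have h3 : β * (1/(40*β)) = 1/40 := by field_simp
    linarith [h3 ▸ h2]
  set p : ℝ := β * A ^ 2 with hpdef
  have hdenR : (0:ℝ) < 1 + 6 * p := by linarith
  set b : ℝ := A / (1 + 6 * p) with hbdef
  set c : ℝ := 2 * p * A with hcdef
  have hb0 : 0 < b := by positivity
  have hc0 : 0 < c := by positivity
  have hbA : b * (1 + 6 * p) = A := by rw [hbdef]; exact div_mul_cancel₀ A hdenR.ne'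
  have hDC : (1 + 6 * (β:ℂ) * (A:ℂ) ^ 2) = ((1 + 6 * p : ℝ) : ℂ) := by
    push_cast [hpdef]; ring
  have hdenC : (1 + 6 * (β:ℂ) * (A:ℂ) ^ 2) ≠ 0 := by
    rw [hDC]; exact_mod_cast hdenR.ne'
  have hbC : (b:ℂ) * (1 + 6 * (β:ℂ) * (A:ℂ) ^ 2) = (A:ℂ) := by
    rw [hDC]; exact_mod_cast congrArg (Complex.ofReal) hbA
  have hcC : (c:ℂ) = 2 * (β:ℂ) * (A:ℂ) ^ 3 := by
    push_cast [hcdef, hpdef]; ring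
  have hsub : ζ₁ - ζ₂ ≠ 0 := sub_ne_zero.mpr hne
  set D : ℂ := 1 + 6 * (β:ℂ) * (A:ℂ) ^ 2 with hDdef
  set w : ℂ := ζ₁ * ζ₂ with hwdef
  set S : ℂ := ζ₁^2 + ζ₁*ζ₂ + ζ₂^2 with hSdef
  have h2 : D^2 * ((ζ₁ - ζ₂) * ((A:ℂ) - (b:ℂ)*w + (c:ℂ)*(w*S))) = 0 := by
    field_simp at hf
    linear_combination (-D) * hf + (-D*(ζ₁-ζ₂)*w)*hbC + (D^2*(ζ₁-ζ₂)*w*S)*hcC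
  have key : (A:ℂ) = (b:ℂ)*w - (c:ℂ)*(w*S) := by
    have h3 := (mul_eq_zero.mp h2).resolve_left (pow_ne_zero 2 hdenC)
    have h4 := (mul_eq_zero.mp h3).resolve_left hsub
    linear_combination h4
  -- pass to real parts
  have hre : A = b * w.re - c * (w*S).re := by
    have := congrArg Complex.re key
    simpa [Complex.re_ofReal_mul] using this
  set x : ℝ := w.re with hxdef
  have hwabs : ‖w‖ < 1 := by
    rw [hwdef, norm_mul]
    calc ‖ζ₁‖ * ‖ζ₂‖ ≤ ‖ζ₁‖ * 1 :=
          mul_le_mul_of_nonneg_left h2l.le (norm_nonneg ζ₁)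
      _ = ‖ζ₁‖ := mul_one _
      _ < 1 := h1l
  have hx1 : x < 1 := lt_of_le_of_lt (Complex.re_le_norm w) hwabs
  have hSabs : ‖S‖ ≤ 3 := by
    have ha1 := norm_add_le (ζ₁^2 + ζ₁*ζ₂) (ζ₂^2)
    have ha2 := norm_add_le (ζ₁^2) (ζ₁*ζ₂)
    simp only [norm_pow, norm_mul] at ha1 ha2
    rw [hSdef]
    have e1 : ‖ζ₁‖ ^ 2 ≤ 1 := pow_le_one₀ (norm_nonneg ζ₁) h1l.le
    have e2 : ‖ζ₂‖ ^ 2 ≤ 1 := pow_le_one₀ (norm_nonneg ζ₂) h2l.le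
    have e3 : ‖ζ₁‖ * ‖ζ₂‖ ≤ 1 :=
      mul_le_one₀ h1l.le (norm_nonneg ζ₂) h2l.le
    linarith [ha1, ha2]
  set R : ℝ := (w*S).re with hRdef
  have hWabs : ‖(w*S)‖ ≤ 3 := by
    rw [norm_mul]
    have := mul_le_mul hwabs.le hSabs (norm_nonneg S) zero_le_one
    linarith
  have hRabs : |R| ≤ 3 := (Complex.abs_re_le_norm (w*S)).trans hWabs
  have hRlo3 : -3 ≤ R := by have := abs_le.mp hRabs; linarith [this.1]
  -- Step 1 : x ≥ 1 - 36 p²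
  have hbx : A - 3*c ≤ b*x := by
    have := mul_le_mul_of_nonneg_left hRlo3 hc0.le
    linarith [hre]
  have hblow : b*(1 - 36*p^2) = A*(1 - 6*p) := by linear_combination (1-6*p)*hbA
  have hx0' : b*(1 - 36*p^2) ≤ b*x := by linarith [hblow, hbx, hcdef]
  have hx0 : 1 - 36*p^2 ≤ x := (mul_le_mul_iff_right₀ hb0).mp hx0'
  -- Step 2 : |w-1| small
  set η : ℝ := ‖(w - 1)‖ with hηdef
  have hη0 : 0 ≤ η := norm_nonneg _
  have habsw2 : x^2 + w.im^2 < 1 := by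
    have h := Complex.sq_norm w
    rw [Complex.normSq_apply] at h
    have h2 : ‖w‖ ^ 2 < 1 := by
      have := pow_lt_one₀ (norm_nonneg w) hwabs (two_ne_zero)
      simpa using this
    rw [hxdef]
    linarith [h, h2]
  have hη2 : η^2 ≤ 2 - 2*x := by
    rw [hηdef, Complex.sq_norm, Complex.normSq_apply]
    simp only [Complex.sub_re, Complex.sub_im, Complex.one_re, Complex.one_im]
    have hx' : w.re = x := rfl
    linarith [habsw2, hx']
  have hη9 : η ≤ 9*p := by
    by_contra hcon
    push_neg at hcon
    have h1 : (9*p)*(9*p) < η*η := mul_lt_mul'' hcon hcon (by positivity) (by positivity)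
    linarith [h1, hη2, hx0]
  -- Step 3 : lower bound on R
  have hsplit : R = ((w-1)*S).re + S.re := by
    rw [hRdef]
    have hws : w*S = (w-1)*S + S := by ring
    rw [hws, Complex.add_re]
  have hws1 : |((w-1)*S).re| ≤ 3*η := by
    refine (Complex.abs_re_le_norm _).trans ?_
    rw [norm_mul]
    have := mul_le_mul_of_nonneg_left hSabs hη0
    linarith
  have hre1 : |(ζ₁^2).re| ≤ 1 := by
    refine (Complex.abs_re_le_norm _).trans ?_
    rw [norm_pow]
    exact pow_le_one₀ (norm_nonneg ζ₁) h1l.le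
  have hre2 : |(ζ₂^2).re| ≤ 1 := by
    refine (Complex.abs_re_le_norm _).trans ?_
    rw [norm_pow]
    exact pow_le_one₀ (norm_nonneg ζ₂) h2l.le
  have hSre : S.re = (ζ₁^2).re + x + (ζ₂^2).re := by
    rw [hSdef, Complex.add_re, Complex.add_re, hxdef, hwdef]
  have hR : -3*η - 2 + x ≤ R := by
    rw [hsplit, hSre]
    have := abs_le.mp hws1
    have := abs_le.mp hre1
    have := abs_le.mp hre2
    linarith [ (abs_le.mp hws1).1, (abs_le.mp hre1).1, (abs_le.mp hre2).1 ]
  -- Final contradiction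
  have h5 : A ≤ b*x + c*(3*η + 2 - x) := by
    have := mul_le_mul_of_nonneg_left hR hc0.le
    linarith [hre]
  have hbx1 : b*x ≤ b := mul_le_of_le_one_right hb0.le hx1.le
  have hc6 : c*(3*η + 2 - x) ≤ c*(1 + 27*p + 36*p^2) := by
    refine mul_le_mul_of_nonneg_left ?_ hc0.le
    linarith [hη9, hx0]
  have h6 : A ≤ b + c*(1 + 27*p + 36*p^2) := by linarith [h5, hbx1, hc6]
  have h7 : b + 6*p*b = A := by linear_combination hbA
  have hcq : c*(1 + 27*p + 36*p^2) = 2*p*(A*(1 + 27*p + 36*p^2)) := by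
    rw [hcdef]; ring
  have h8' : 2*p*(3*b) ≤ 2*p*(A*(1 + 27*p + 36*p^2)) := by linarith [h6, h7, hcq]
  have h8 : 3*b ≤ A*(1 + 27*p + 36*p^2) := le_of_mul_le_mul_left h8' (by linarith)
  have h9 := mul_le_mul_of_nonneg_left h8 hdenR.le
  have hq1 : p*p < p*(1/40) := mul_lt_mul_of_pos_left hp40 hp
  have hq2' : p^2*p < p^2*(1/40) := mul_lt_mul_of_pos_left hp40 (by positivity)
  have hq3 : p^2*(1/40) < (p*(1/40))*(1/40) := by linarith [hq1]
  have hq : 33*p + 198*p^2 + 216*p^3 < 1 := by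
    have e1 : p^2 < p*(1/40) := by linarith [hq1]
    have e2 : p^3 < p*(1/1600) := by linarith [hq2', hq3]
    linarith [hp, hp40, e1, e2]
  have h10 : A*(33*p + 198*p^2 + 216*p^3) < A*1 := mul_lt_mul_of_pos_left hq hA
  linarith [h9, h10, hA, hbA]
end
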